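/- arXiv:2402.01072 — 8 statements merged into one kernel-verified Lean document; each statement's English description precedes it below -/
import Mathlib

section
/- Let G be a finite group, H ≤ K ≤ G. If H is weakly SΦ-supplemented in G, then H is weakly SΦ-supplemented in K. -/
open scoped Pointwise

/-- A subgroup `A` is S-permutable in `G` if it permutes with every Sylow subgroup of `G`. -/
def IsSPermutable {G : Type*} [Group G] (A : Subgroup G) : Prop :=
  ∀ (p : ℕ), p.Prime → ∀ Q : Sylow p G,
    (A : Set G) * ((Q : Subgroup G) : Set G) = ((Q : Subgroup G) : Set G) * (A : Set G)

/-- `A_{sG}`: the subgroup generated by all subgroups of `A` that are S-permutable in `G`. -/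
def sCore {G : Type*} [Group G] (A : Subgroup G) : Subgroup G :=
  ⨆ B ∈ {B : Subgroup G | B ≤ A ∧ IsSPermutable B}, B

/-- `A` is weakly SΦ-supplemented in `G` if there is `T ≤ G` with `G = AT` and
`A ∩ T ≤ Φ(A) · A_{sG}`. -/
def WeaklySPhiSupplemented {G : Type*} [Group G] (A : Subgroup G) : Prop :=
  ∃ T : Subgroup G, (A : Set G) * (T : Set G) = Set.univ ∧
    A ⊓ T ≤ (frattini A).map A.subtype ⊔ sCore A

/-- `G` is `p`-nilpotent: it has a normal `p`-complement. -/
def IsPNilpotent (p : ℕ) (G : Type*) [Group G] : Prop :=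
  ∃ H : Subgroup G, H.Normal ∧ (∃ n : ℕ, H.index = p ^ n) ∧ ¬ p ∣ Nat.card H

/-- A group is supersolvable if it has a normal series with cyclic factors. -/
def IsSupersolvable (G : Type*) [Group G] : Prop :=
  ∃ (n : ℕ) (s : Fin (n + 1) → Subgroup G),
    s 0 = ⊥ ∧ s (Fin.last n) = ⊤ ∧ Monotone s ∧ (∀ i, (s i).Normal) ∧
    ∀ i : Fin n, ∃ x : G, s i.succ ≤ s i.castSucc ⊔ Subgroup.zpowers x

/-- `H/K` is a chief factor of `G`. -/
def IsChiefFactor {G : Type*} [Group G] (K H : Subgroup G) : Prop :=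
  K.Normal ∧ H.Normal ∧ K < H ∧
    ∀ L : Subgroup G, L.Normal → K ≤ L → L ≤ H → L = K ∨ L = H

/-- A quasisimple group: perfect, and simple modulo its center. -/
def IsQuasisimple (G : Type*) [Group G] : Prop :=
  commutator G = ⊤ ∧ IsSimpleGroup (G ⧸ Subgroup.center G)

/-- A subgroup is subnormal if there is an ascending chain of successively normal
subgroups reaching `⊤`. -/
def IsSubnormalSubgroup {G : Type*} [Group G] (H : Subgroup G) : Prop :=
  ∃ (n : ℕ) (s : Fin (n + 1) → Subgroup G), s 0 = H ∧ s (Fin.last n) = ⊤ ∧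
    ∀ i : Fin n, s i.castSucc ≤ s i.succ ∧ ((s i.castSucc).subgroupOf (s i.succ)).Normal

/-- The layer `E(G)`: the subgroup generated by all components of `G`. -/
def layer (G : Type*) [Group G] : Subgroup G :=
  ⨆ C ∈ {C : Subgroup G | IsSubnormalSubgroup C ∧ IsQuasisimple C}, C

/-- The Fitting subgroup `F(G)`: generated by all nilpotent normal subgroups. -/
def fittingSubgroup (G : Type*) [Group G] : Subgroup G :=
  ⨆ H ∈ {H : Subgroup G | H.Normal ∧ Group.IsNilpotent H}, H

/-- The generalized Fitting subgroup `F*(G) = E(G) F(G)`. -/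
def genFitting (G : Type*) [Group G] : Subgroup G :=
  layer G ⊔ fittingSubgroup G

section Aux

open Subgroup

variable {G : Type*} [Group G]

lemma aux_mul_inter (B K P : Subgroup G) (hBK : B ≤ K) :
    (B : Set G) * ((P : Set G) ∩ (K : Set G)) = ((B : Set G) * (P : Set G)) ∩ (K : Set G) := by
  ext x
  simp only [Set.mem_mul, Set.mem_inter_iff]
  constructor
  · rintro ⟨b, hb, p, ⟨hp, hpK⟩, rfl⟩
    exact ⟨⟨b, hb, p, hp, rfl⟩, K.mul_mem (hBK hb) hpK⟩
  · rintro ⟨⟨b, hb, p, hp, rfl⟩, hK⟩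
    exact ⟨b, hb, p, ⟨hp, by simpa using K.mul_mem (K.inv_mem (hBK hb)) hK⟩, rfl⟩

lemma aux_inter_mul (B K P : Subgroup G) (hBK : B ≤ K) :
    ((P : Set G) ∩ (K : Set G)) * (B : Set G) = ((P : Set G) * (B : Set G)) ∩ (K : Set G) := by
  ext x
  simp only [Set.mem_mul, Set.mem_inter_iff]
  constructor
  · rintro ⟨p, ⟨hp, hpK⟩, b, hb, rfl⟩
    exact ⟨⟨p, hp, b, hb, rfl⟩, K.mul_mem hpK (hBK hb)⟩
  · rintro ⟨⟨p, hp, b, hb, rfl⟩, hK⟩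
    exact ⟨p, ⟨hp, by simpa using K.mul_mem hK (K.inv_mem (hBK hb))⟩, b, hb, rfl⟩

/-- Kegel: an S-permutable subgroup of `G` contained in `K` is S-permutable in `K`. -/
lemma aux_sperm (B K : Subgroup G) (hBK : B ≤ K) (hB : IsSPermutable B) :
    IsSPermutable (B.subgroupOf K) := by
  intro p hp Q
  -- find a Sylow `P` of `G` containing the image of `Q`
  obtain ⟨P, hQP⟩ := (Q.2.map K.subtype).exists_le_sylow
  -- the image of `Q` in `G` is `P ⊓ K`
  have hQeq : ((Q : Subgroup K)).map K.subtype = (P : Subgroup G) ⊓ K := by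
    have h1 : (Q : Subgroup K) ≤ ((P : Subgroup G) ⊓ K).subgroupOf K := by
      rw [← Subgroup.comap_subtype, ← Subgroup.map_le_iff_le_comap]
      exact le_inf hQP (by simpa using Subgroup.map_subtype_le (Q : Subgroup K))
    have h2 : ((P : Subgroup G) ⊓ K).subgroupOf K = (Q : Subgroup K) :=
      Q.3 ((P.2.to_le inf_le_left).comap_subtype) h1
    calc ((Q : Subgroup K)).map K.subtype
        = (((P : Subgroup G) ⊓ K).subgroupOf K).map K.subtype := by rw [h2]
      _ = ((P : Subgroup G) ⊓ K) ⊓ K := Subgroup.subgroupOf_map_subtype _ _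
      _ = (P : Subgroup G) ⊓ K := by rw [inf_assoc, inf_idem]
  -- pass to sets in `G` via the injective map `K.subtype`
  apply Set.image_injective.mpr (Subgroup.subtype_injective K)
  rw [Set.image_mul (K.subtype : K →* G), Set.image_mul (K.subtype : K →* G)]
  have hB' : (K.subtype : K →* G) '' (B.subgroupOf K : Set K) = (B : Set G) := by
    rw [← Subgroup.coe_map, Subgroup.subgroupOf_map_subtype, inf_eq_left.mpr hBK]
  have hQ' : (K.subtype : K →* G) '' ((Q : Subgroup K) : Set K)
      = ((P : Subgroup G) : Set G) ∩ (K : Set G) := by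
    rw [← Subgroup.coe_map, hQeq, Subgroup.coe_inf]
  rw [hB', hQ', aux_mul_inter B K P hBK, aux_inter_mul B K P hBK, hB p hp P]

end Aux

theorem stmt0 {G : Type*} [Group G] [Finite G] (H K : Subgroup G) (hHK : H ≤ K)
    (h : WeaklySPhiSupplemented H) :
    WeaklySPhiSupplemented (H.subgroupOf K) := by
  obtain ⟨T, hT, hHT⟩ := h
  refine ⟨T.subgroupOf K, ?_, ?_⟩
  · -- `K = H (T ∩ K)`
    ext k
    simp only [Set.mem_univ, iff_true]
    have hk : (k : G) ∈ (H : Set G) * (T : Set G) := by rw [hT]; trivial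
    obtain ⟨a, ha, b, hb, hab⟩ := hk
    have hbK : b ∈ K := by
      have : a⁻¹ * (k : G) ∈ K := K.mul_mem (K.inv_mem (hHK ha)) k.2
      rwa [show a⁻¹ * (k : G) = b by rw [← hab]; group] at this
    refine ⟨⟨a, hHK ha⟩, Subgroup.mem_subgroupOf.mpr ha,
      ⟨b, hbK⟩, Subgroup.mem_subgroupOf.mpr hb, ?_⟩
    exact Subtype.ext hab
  · -- the intersection condition
    intro x hx
    have hxG : (x : G) ∈ H ⊓ T :=
      ⟨Subgroup.mem_subgroupOf.mp hx.1, Subgroup.mem_subgroupOf.mp hx.2⟩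
    have hxG' := hHT hxG
    -- it suffices to show the `G`-level bound maps into the `K`-level bound
    have key : (frattini H).map H.subtype ⊔ sCore H ≤
        ((frattini (H.subgroupOf K)).map (H.subgroupOf K).subtype
          ⊔ sCore (H.subgroupOf K)).map K.subtype := by
      rw [Subgroup.map_sup]
      apply sup_le
      · -- Frattini part
        rintro g hg
        obtain ⟨y, hy, rfl⟩ := hg
        have hy' : (Subgroup.subgroupOfEquivOfLe hHK).symm y ∈ frattini (H.subgroupOf K) := by
          have := frattini_le_comap_frattini_of_surjective
            (φ := (Subgroup.subgroupOfEquivOfLe hHK).symm.toMonoidHom)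
            (Subgroup.subgroupOfEquivOfLe hHK).symm.surjective hy
          simpa [Subgroup.mem_comap] using this
        refine le_sup_left (α := Subgroup G) ?_
        exact ⟨(H.subgroupOf K).subtype ((Subgroup.subgroupOfEquivOfLe hHK).symm y),
          ⟨_, hy', rfl⟩, rfl⟩
      · -- sCore part
        refine le_trans ?_ le_sup_right
        rw [sCore, iSup_le_iff]
        intro B
        rw [iSup_le_iff]
        rintro ⟨hBH, hBperm⟩
        have hBK : B ≤ K := hBH.trans hHK
        have : B.subgroupOf K ≤ sCore (H.subgroupOf K) := by
          refine le_trans ?_ (le_iSup₂ (f := fun (B : Subgroup K) _ => B) (B.subgroupOf K)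
            ⟨fun x hx => Subgroup.mem_subgroupOf.mpr (hBH (Subgroup.mem_subgroupOf.mp hx)),
              aux_sperm B K hBK hBperm⟩)
          exact le_rfl
        calc B = (B.subgroupOf K).map K.subtype := by
              rw [Subgroup.subgroupOf_map_subtype, inf_eq_left.mpr hBK]
          _ ≤ (sCore (H.subgroupOf K)).map K.subtype := Subgroup.map_mono this
    obtain ⟨y, hy, hyx⟩ := key hxG'
    have : y = x := Subtype.ext hyx
    rwa [this] at hy
end

section
/- Let G be a finite group, N ⊴ G, and H ≤ G with N ≤ H. If H is weakly SΦ-supplemented in G, then H/N is weakly SΦ-supplemented in G/N. -/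
open scoped Pointwise

lemma sPerm_map {G : Type*} [Group G] [Finite G] {G' : Type*} [Group G'] {f : G →* G'}
    (hf : Function.Surjective f) {B : Subgroup G} (hB : IsSPermutable B) :
    IsSPermutable (B.map f) := by
  intro p hp Q
  haveI := Fact.mk hp
  obtain ⟨P, rfl⟩ := Sylow.mapSurjective_surjective hf p Q
  have hQ : ((P.mapSurjective hf : Subgroup G') : Set G')
      = f '' ((P : Subgroup G) : Set G) := by
    rw [Sylow.coe_mapSurjective]; rfl
  have hBc : ((B.map f : Subgroup G') : Set G') = f '' (B : Set G) := rfl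
  rw [hQ, hBc, ← Set.image_mul, ← Set.image_mul, hB p hp P]

theorem stmt1 {G : Type*} [Group G] [Finite G] (N H : Subgroup G) [N.Normal]
    (hNH : N ≤ H) (h : WeaklySPhiSupplemented H) :
    WeaklySPhiSupplemented (H.map (QuotientGroup.mk' N)) := by
  obtain ⟨T, hT1, hT2⟩ := h
  set f := QuotientGroup.mk' N with hfdef
  have hf : Function.Surjective f := QuotientGroup.mk'_surjective N
  refine ⟨T.map f, ?_, ?_⟩
  · have : ((H.map f : Subgroup _) : Set _) * ((T.map f : Subgroup _) : Set _)
        = f '' ((H : Set G) * (T : Set G)) := by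
      rw [Set.image_mul]; rfl
    rw [this, hT1, Set.image_univ, Set.range_eq_univ.mpr hf]
  · -- first: H.map f ⊓ T.map f ≤ (H ⊓ T).map f
    have hstep : H.map f ⊓ T.map f ≤ (H ⊓ T).map f := by
      rintro x ⟨⟨a, ha, rfl⟩, ⟨t, ht, he⟩⟩
      have hker : a⁻¹ * t ∈ N := by
        rw [← QuotientGroup.ker_mk' N, ← hfdef, MonoidHom.mem_ker, map_mul, map_inv, he,
          inv_mul_cancel]
      have htH : t ∈ H := by
        have := mul_mem ha (hNH hker)
        simpa using this
      exact ⟨t, ⟨htH, ht⟩, he⟩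
    refine hstep.trans (le_trans (Subgroup.map_mono hT2) ?_)
    rw [Subgroup.map_sup]
    apply sup_le_sup
    · -- frattini part
      set φ := f.subgroupMap H with hφdef
      have hφs : Function.Surjective φ := f.subgroupMap_surjective H
      have hcomm : (H.map f).subtype.comp φ = f.comp H.subtype := rfl
      calc ((frattini H).map H.subtype).map f
          = ((frattini H).map φ).map (H.map f).subtype := by
            rw [Subgroup.map_map, Subgroup.map_map, hcomm]
        _ ≤ (frattini (H.map f)).map (H.map f).subtype := by
            apply Subgroup.map_mono
            exact Subgroup.map_le_iff_le_comap.mpr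
              (frattini_le_comap_frattini_of_surjective hφs)
    · -- sCore part
      rw [sCore, Subgroup.map_iSup]
      apply iSup_le
      intro B
      rw [Subgroup.map_iSup]
      apply iSup_le
      intro hB
      have h1 : B.map f ≤ H.map f := Subgroup.map_mono hB.1
      have h2 : IsSPermutable (B.map f) := sPerm_map hf hB.2
      exact le_iSup₂ (f := fun (C : Subgroup (G ⧸ N))
        (_ : C ∈ {C : Subgroup (G ⧸ N) | C ≤ H.map f ∧ IsSPermutable C}) => C)
        (B.map f) ⟨h1, h2⟩
end

section
/- Let G be a finite group, N ⊴ G, and H ≤ G with gcd(|N|,|H|) = 1. If H is weakly SΦ-supplemented in G, then NH/N is weakly SΦ-supplemented in G/N. -/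
open scoped Pointwise

open Subgroup in
lemma quotEmbed_surjective' {G : Type*} [Group G] {s t : Subgroup G} (T : Subgroup G) (h : s ≤ t)
    (hc : (t : Set G) ⊆ (s : Set G) * (T : Set G)) :
    Function.Surjective (Subgroup.quotientSubgroupOfEmbeddingOfLE T h) := by
  intro x
  refine x.inductionOn' ?_
  rintro ⟨y, hy⟩
  obtain ⟨a, ha, b, hb, rfl⟩ := hc hy
  refine ⟨QuotientGroup.mk ⟨a, ha⟩, ?_⟩
  rw [Subgroup.quotientSubgroupOfEmbeddingOfLE_apply_mk]
  apply Quotient.sound'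
  rw [QuotientGroup.leftRel_apply]
  show (_ : G) ∈ T
  simpa using hb

lemma relindex_eq_of_cover' {G : Type*} [Group G] {s t : Subgroup G} (T : Subgroup G) (h : s ≤ t)
    (hc : (t : Set G) ⊆ (s : Set G) * (T : Set G)) :
    T.relIndex s = T.relIndex t :=
  Nat.card_congr (Equiv.ofBijective _
    ⟨(Subgroup.quotientSubgroupOfEmbeddingOfLE T h).injective, quotEmbed_surjective' T h hc⟩)

/-- Image of an S-permutable subgroup under a surjective hom is S-permutable. -/
lemma IsSPermutable.map {G G' : Type*} [Group G] [Group G'] [Finite G] {f : G →* G'}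
    (hf : Function.Surjective f) {B : Subgroup G} (hB : IsSPermutable B) :
    IsSPermutable (B.map f) := by
  intro p hp Q'
  haveI := Fact.mk hp
  obtain ⟨P, rfl⟩ := Sylow.mapSurjective_surjective hf p Q'
  rw [Sylow.coe_mapSurjective, Subgroup.coe_map, Subgroup.coe_map, ← Set.image_mul,
    ← Set.image_mul, hB p hp P]

theorem stmt2 {G : Type*} [Group G] [Finite G] (N H : Subgroup G) [N.Normal]
    (hcop : Nat.Coprime (Nat.card N) (Nat.card H)) (h : WeaklySPhiSupplemented H) :
    WeaklySPhiSupplemented ((N ⊔ H).map (QuotientGroup.mk' N)) := by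
  obtain ⟨T, hT1, hT2⟩ := h
  set f := QuotientGroup.mk' N with hf
  have hfs : Function.Surjective f := QuotientGroup.mk'_surjective N
  -- Step 1 : N ≤ T
  have e1 : T.relIndex N = T.relIndex (N ⊔ T) :=
    relindex_eq_of_cover' T le_sup_left (Subgroup.normal_mul N T).le
  have e2 : T.relIndex H = T.relIndex ⊤ :=
    relindex_eq_of_cover' T le_top (by rw [Subgroup.coe_top, ← hT1])
  have hdvdH : T.relIndex N ∣ Nat.card H := by
    rw [e1]
    refine dvd_trans (Subgroup.relIndex_dvd_index_of_le le_sup_right) ?_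
    rw [← Subgroup.relIndex_top_right, ← e2]
    exact (T.subgroupOf H).index_dvd_card
  have hdvdN : T.relIndex N ∣ Nat.card N := (T.subgroupOf N).index_dvd_card
  have hNT : N ≤ T :=
    Subgroup.relIndex_eq_one.mp ((hcop.coprime_dvd_left hdvdN).eq_one_of_dvd hdvdH)
  -- Step 2 : rewrite the subgroup
  have hEq : (N ⊔ H).map f = H.map f := by
    rw [Subgroup.map_sup, (Subgroup.map_eq_bot_iff _).mpr (QuotientGroup.ker_mk' N).ge,
      bot_sup_eq]
  rw [hEq]
  refine ⟨T.map f, ?_, ?_⟩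
  · rw [Subgroup.coe_map, Subgroup.coe_map, ← Set.image_mul, hT1, Set.image_univ,
      hfs.range_eq]
  · have hinter : H.map f ⊓ T.map f ≤ (H ⊓ T).map f := by
      rintro x ⟨hx1, hx2⟩
      obtain ⟨a, ha, rfl⟩ := hx1
      obtain ⟨b, hb, hab⟩ := hx2
      have hker : b⁻¹ * a ∈ N := by
        rw [← QuotientGroup.ker_mk' N, MonoidHom.mem_ker, map_mul, map_inv, hab,
          inv_mul_cancel]
      have haT : a ∈ T := by
        have : b * (b⁻¹ * a) ∈ T := T.mul_mem hb (hNT hker)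
        simpa using this
      exact ⟨a, ⟨ha, haT⟩, rfl⟩
    have hphi : ((frattini H).map H.subtype).map f
        ≤ (frattini (H.map f)).map (H.map f).subtype := by
      rintro x ⟨y, ⟨z, hz, rfl⟩, rfl⟩
      exact ⟨(f.subgroupMap H) z,
        frattini_le_comap_frattini_of_surjective (f.subgroupMap_surjective H) hz, rfl⟩
    have hsc : (sCore H).map f ≤ sCore (H.map f) := by
      rw [Subgroup.map_le_iff_le_comap, sCore]
      refine iSup₂_le ?_
      rintro B ⟨hBH, hBperm⟩
      rw [← Subgroup.map_le_iff_le_comap]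
      exact le_iSup₂_of_le (B.map f) ⟨Subgroup.map_mono hBH, hBperm.map hfs⟩ (le_refl _)
    calc H.map f ⊓ T.map f ≤ (H ⊓ T).map f := hinter
      _ ≤ ((frattini H).map H.subtype ⊔ sCore H).map f := Subgroup.map_mono hT2
      _ = ((frattini H).map H.subtype).map f ⊔ (sCore H).map f := Subgroup.map_sup _ _ _
      _ ≤ _ := sup_le_sup hphi hsc
end

section
/- Let P be a nontrivial normal p-subgroup of a finite group G, where p is the smallest prime dividing |G| and exp(P) = p. If every minimal subgroup of P that has no supersolvable supplement in G is weakly SΦ-supplemented in G, then every chief factor of G below P is cyclic (equivalently, of order p). -/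
open scoped Pointwise

open Subgroup


section Aux

variable {G : Type*} [Group G]

/-- Subgroups of a cyclic-generated subgroup: zpowers is cyclic. -/
lemma aux_isCyclic_zpowers (y : G) : IsCyclic (Subgroup.zpowers y) := by
  refine ⟨⟨⟨y, Subgroup.mem_zpowers y⟩, ?_⟩⟩
  rintro ⟨x, hx⟩
  obtain ⟨k, hk⟩ := Subgroup.mem_zpowers_iff.mp hx
  refine Subgroup.mem_zpowers_iff.mpr ⟨k, ?_⟩
  ext
  simpa using hk

/-- A subgroup equals a larger one if it has at least the same cardinality. -/
lemma aux_eq_of_le_of_card_le [Finite G] {A B : Subgroup G} (h : A ≤ B)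
    (hc : Nat.card B ≤ Nat.card A) : A = B := by
  apply SetLike.coe_injective
  refine Set.eq_of_subset_of_ncard_le h ?_ (Set.toFinite _)
  rwa [← Nat.card_coe_set_eq, ← Nat.card_coe_set_eq]

lemma aux_card_lt_of_lt [Finite G] {A B : Subgroup G} (h : A ≤ B) (hne : A ≠ B) :
    Nat.card A < Nat.card B := by
  refine lt_of_le_of_ne (Subgroup.card_le_of_le h) fun hc => hne ?_
  exact aux_eq_of_le_of_card_le h hc.ge

/-- Cardinality of a product set of two subgroups intersecting trivially. -/
lemma aux_card_mul_of_disjoint {A T : Subgroup G} (hAT : A ⊓ T = ⊥) :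
    Nat.card ((A : Set G) * (T : Set G) : Set G) = Nat.card A * Nat.card T := by
  have hf : Function.Bijective
      (fun z : A × T => (⟨z.1 * z.2, Set.mul_mem_mul z.1.2 z.2.2⟩ :
        ((A : Set G) * (T : Set G) : Set G))) := by
    constructor
    · rintro ⟨⟨a1, ha1⟩, ⟨t1, ht1⟩⟩ ⟨⟨a2, ha2⟩, ⟨t2, ht2⟩⟩ h
      have h' : a1 * t1 = a2 * t2 := congrArg Subtype.val h
      have ha1' : a1 = a2 * t2 * t1⁻¹ := by rw [← h']; group
      have key : a2⁻¹ * a1 ∈ A ⊓ T := by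
        refine Subgroup.mem_inf.mpr ⟨A.mul_mem (A.inv_mem ha2) ha1, ?_⟩
        have : a2⁻¹ * a1 = t2 * t1⁻¹ := by rw [ha1']; group
        rw [this]
        exact T.mul_mem ht2 (T.inv_mem ht1)
      rw [hAT, Subgroup.mem_bot] at key
      have ha : a2 = a1 := inv_mul_eq_one.mp key
      have ht : t1 = t2 := by
        rw [← ha] at h'
        exact mul_left_cancel h'
      simp [Prod.ext_iff, Subtype.ext_iff, ha.symm, ht]
    · rintro ⟨z, hz⟩
      obtain ⟨a, ha, t, ht, rfl⟩ := hz
      exact ⟨(⟨a, ha⟩, ⟨t, ht⟩), rfl⟩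
  rw [← Nat.card_prod]
  exact (Nat.card_congr (Equiv.ofBijective
    (fun z : A × T => (⟨z.1 * z.2, Set.mul_mem_mul z.1.2 z.2.2⟩ :
        ((A : Set G) * (T : Set G) : Set G))) hf)).symm

/-- If `A*T = G` (as sets) with trivial intersection and `|A| = p`, then `T` has index `p`. -/
lemma aux_index_eq_of_prod [Finite G] {p : ℕ} {A T : Subgroup G}
    (hprod : (A : Set G) * (T : Set G) = Set.univ) (hAT : A ⊓ T = ⊥)
    (hcA : Nat.card A = p) : T.index = p := by
  have hcard : Nat.card G = Nat.card A * Nat.card T := by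
    rw [← aux_card_mul_of_disjoint hAT, hprod]
    exact (Nat.card_congr (Equiv.Set.univ G)).symm
  have h2 := T.index_mul_card
  rw [hcard, hcA] at h2
  exact Nat.eq_of_mul_eq_mul_right Nat.card_pos h2

/-- A subgroup whose index is the smallest prime dividing the order of the group is normal. -/
lemma aux_normal_of_smallest_prime [Finite G] {p : ℕ} (hp : p.Prime)
    (hmin : ∀ q : ℕ, q.Prime → q ∣ Nat.card G → p ≤ q) {T : Subgroup G}
    (hT : T.index = p) : T.Normal := by
  classical
  have hcore : T.normalCore ≤ T := Subgroup.normalCore_le T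
  have h1 : T.normalCore.relIndex T * T.index = T.normalCore.index :=
    Subgroup.relIndex_mul_index hcore
  -- index of the normal core divides p!
  have h2 : T.normalCore.index ∣ (p.factorial) := by
    rw [Subgroup.normalCore_eq_ker, Subgroup.index_ker]
    have hsub : Nat.card (MulAction.toPermHom G (G ⧸ T)).range ∣
        Nat.card (Equiv.Perm (G ⧸ T)) := Subgroup.card_subgroup_dvd_card _
    have : Nat.card (Equiv.Perm (G ⧸ T)) = (p.factorial) := by
      have : Fintype (G ⧸ T) := Fintype.ofFinite _
      rw [Nat.card_eq_fintype_card, Fintype.card_perm, ← Nat.card_eq_fintype_card,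
        ← Subgroup.index_eq_card, hT]
    rwa [this] at hsub
  set r := T.normalCore.relIndex T with hr
  have h1' : r * p = T.normalCore.index := by rw [← hT]; exact h1
  have hrdvd : r ∣ (p - 1).factorial := by
    have hfac : p.factorial = p * (p - 1).factorial := by
      have h0 : p - 1 + 1 = p := Nat.succ_pred_eq_of_pos hp.pos
      calc p.factorial = ((p - 1) + 1).factorial := by rw [h0]
        _ = ((p - 1) + 1) * (p - 1).factorial := Nat.factorial_succ _
        _ = p * (p - 1).factorial := by rw [h0]
    have hdd : r * p ∣ p * (p - 1).factorial := by
      rw [← hfac, h1']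
      exact h2
    rw [mul_comm r p] at hdd
    exact (Nat.mul_dvd_mul_iff_left hp.pos).mp hdd
  rcases eq_or_ne r 1 with hr1 | hr1
  · have : T ≤ T.normalCore := Subgroup.relIndex_eq_one.mp hr1
    have heq : T.normalCore = T := le_antisymm hcore this
    rw [← heq]
    exact Subgroup.normalCore_normal T
  · exfalso
    have hq : r.minFac.Prime := Nat.minFac_prime hr1
    have hqr : r.minFac ∣ r := Nat.minFac_dvd r
    have hle : r.minFac ≤ p - 1 := by
      have := (Nat.Prime.dvd_factorial hq).mp (hqr.trans hrdvd)
      exact this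
    have hqG : r.minFac ∣ Nat.card G := by
      calc r.minFac ∣ r := hqr
        _ ∣ T.normalCore.index := h1' ▸ dvd_mul_right r p
        _ ∣ Nat.card G := Subgroup.index_dvd_card _
    have h5 := hmin r.minFac hq hqG
    have h6 : 1 ≤ p := hp.one_lt.le.trans' (by omega)
    omega

/-- In a finite `p`-group, a nontrivial normal subgroup contains a nontrivial element commuting
with everything (an element of the center intersection). -/
lemma aux_exists_comm_elt [Finite G] {p : ℕ} (hp : p.Prime) {S N : Subgroup G}
    (hS : IsPGroup p S) (hNS : N ≤ S) (hNnorm : N.Normal) (hNbot : N ≠ ⊥) :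
    ∃ z ∈ N, z ≠ 1 ∧ ∀ s ∈ S, s * z * s⁻¹ = z := by
  classical
  haveI : Fact p.Prime := ⟨hp⟩
  set N' : Subgroup S := N.subgroupOf S with hN'
  haveI hN'norm : N'.Normal := hNnorm.subgroupOf S
  have hG : IsPGroup p (ConjAct S) := hS.of_equiv ConjAct.toConjAct
  have hdvd : p ∣ Nat.card N' := by
    have hcard : Nat.card N' = Nat.card N :=
      Nat.card_congr (Subgroup.subgroupOfEquivOfLe hNS).toEquiv
    obtain ⟨n, hn⟩ := (IsPGroup.to_le hS hNS).exists_card_eq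
    rcases Nat.eq_zero_or_pos n with rfl | hpos
    · exfalso
      rw [pow_zero] at hn
      exact hNbot (Subgroup.card_eq_one.mp hn)
    · rw [hcard, hn]
      exact dvd_pow_self p hpos.ne'
  have h1fix : (1 : N') ∈ MulAction.fixedPoints (ConjAct S) N' := by
    intro g
    apply Subtype.ext
    rw [ConjAct.Subgroup.val_conj_smul]
    simp
  obtain ⟨b, hbfix, hb1⟩ :=
    hG.exists_fixed_point_of_prime_dvd_card_of_fixed_point N' hdvd h1fix
  refine ⟨((b : S) : G), ?_, ?_, ?_⟩
  · exact (Subgroup.mem_subgroupOf).mp b.2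
  · intro h
    apply hb1
    apply Subtype.ext
    apply Subtype.ext
    simpa using h.symm
  · intro s hs
    have := (MulAction.mem_fixedPoints.mp hbfix) (ConjAct.toConjAct (⟨s, hs⟩ : S))
    have hval := congrArg (Subtype.val) this
    rw [ConjAct.Subgroup.val_conj_smul] at hval
    have hval2 := congrArg (Subtype.val) hval
    rw [ConjAct.smul_def, ConjAct.ofConjAct_toConjAct] at hval2
    simpa using hval2

/-- A subgroup containing a Sylow subgroup for every prime is the whole group. -/
lemma aux_eq_top_of_sylows [Finite G] (U : Subgroup G)
    (h : ∀ q : ℕ, q.Prime → q ∣ Nat.card G → ∃ Q : Sylow q G, (Q : Subgroup G) ≤ U) :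
    U = ⊤ := by
  have hG0 : Nat.card G ≠ 0 := Nat.card_pos.ne'
  have hU0 : Nat.card U ≠ 0 := Nat.card_pos.ne'
  have hdvd : Nat.card G ∣ Nat.card U := by
    rw [← Nat.factorization_le_iff_dvd hG0 hU0]
    intro q
    by_cases hq : q.Prime ∧ q ∣ Nat.card G
    · obtain ⟨hq1, hq2⟩ := hq
      haveI : Fact q.Prime := ⟨hq1⟩
      obtain ⟨Q, hQ⟩ := h q hq1 hq2
      have hcQ : Nat.card Q = q ^ (Nat.card G).factorization q := Q.card_eq_multiplicity
      have : q ^ (Nat.card G).factorization q ∣ Nat.card U := by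
        rw [← hcQ]
        exact Subgroup.card_dvd_of_le hQ
      exact (Nat.Prime.pow_dvd_iff_le_factorization hq1 hU0).mp this
    · rcases Classical.em q.Prime with hq1 | hq1
      · have : ¬ q ∣ Nat.card G := fun hd => hq ⟨hq1, hd⟩
        simp [Nat.factorization_eq_zero_of_not_dvd this]
      · simp [Nat.factorization_eq_zero_of_not_prime _ hq1]
  have : Nat.card U = Nat.card G :=
    Nat.dvd_antisymm (Subgroup.card_subgroup_dvd_card U) hdvd
  exact Subgroup.eq_top_of_card_eq U this

/-- Dedekind modular law for subgroups, with a normal factor. -/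
lemma aux_modular {K L M : Subgroup G} [hKn : K.Normal] (hLM : L ≤ M) :
    M ⊓ (L ⊔ K) = L ⊔ (M ⊓ K) := by
  refine le_antisymm ?_ (sup_le (le_inf hLM le_sup_left)
    (le_inf inf_le_left (inf_le_right.trans le_sup_right)))
  intro g hg
  obtain ⟨hgM, hgLK⟩ := Subgroup.mem_inf.mp hg
  rw [← SetLike.mem_coe, Subgroup.mul_normal] at hgLK
  obtain ⟨l, hl, k, hk, rfl⟩ := hgLK
  have hkM : k ∈ M := by
    have : l⁻¹ * (l * k) ∈ M := M.mul_mem (M.inv_mem (hLM hl)) hgM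
    simpa [mul_assoc] using this
  exact Subgroup.mul_mem _ (Subgroup.mem_sup_left hl)
    (Subgroup.mem_sup_right (Subgroup.mem_inf.mpr ⟨hkM, hk⟩))

/-- Helper for normalizer membership. -/
lemma aux_mem_normalizer {L : Subgroup G} {g : G} (h1 : ∀ h ∈ L, g * h * g⁻¹ ∈ L)
    (h2 : ∀ h ∈ L, g⁻¹ * h * g ∈ L) : g ∈ normalizer (L : Set G) := by
  rw [Subgroup.mem_normalizer_iff]
  intro h
  constructor
  · exact fun hh => h1 h hh
  · intro hh
    have := h2 _ hh
    rwa [show g⁻¹ * (g * h * g⁻¹) * g = h by group] at this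

end Aux


section Aux2
variable {G : Type*} [Group G]

/-- The product of two permuting subgroups is a subgroup. -/
def permProd (A B : Subgroup G) (h : (A : Set G) * (B : Set G) = (B : Set G) * (A : Set G)) :
    Subgroup G where
  carrier := (A : Set G) * (B : Set G)
  one_mem' := ⟨1, A.one_mem, 1, B.one_mem, one_mul 1⟩
  mul_mem' := by
    rintro x y ⟨a1, ha1, b1, hb1, rfl⟩ ⟨a2, ha2, b2, hb2, rfl⟩
    have hm : b1 * a2 ∈ (B : Set G) * (A : Set G) := Set.mul_mem_mul hb1 ha2
    rw [← h] at hm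
    obtain ⟨a3, ha3, b3, hb3, hEq⟩ := hm
    have hEq' : a3 * b3 = b1 * a2 := hEq
    refine ⟨a1 * a3, A.mul_mem ha1 ha3, b3 * b2, B.mul_mem hb3 hb2, ?_⟩
    show a1 * a3 * (b3 * b2) = a1 * b1 * (a2 * b2)
    rw [show a1 * a3 * (b3 * b2) = a1 * (a3 * b3) * b2 by group, hEq']
    group
  inv_mem' := by
    rintro x ⟨a, ha, b, hb, rfl⟩
    have hm : b⁻¹ * a⁻¹ ∈ (B : Set G) * (A : Set G) :=
      Set.mul_mem_mul (B.inv_mem hb) (A.inv_mem ha)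
    rw [← h] at hm
    obtain ⟨a3, ha3, b3, hb3, hEq⟩ := hm
    have hEq' : a3 * b3 = b⁻¹ * a⁻¹ := hEq
    exact ⟨a3, ha3, b3, hb3, by show a3 * b3 = (a * b)⁻¹; rw [hEq', mul_inv_rev]⟩

lemma left_le_permProd {A B : Subgroup G}
    (h : (A : Set G) * (B : Set G) = (B : Set G) * (A : Set G)) : A ≤ permProd A B h :=
  fun a ha => ⟨a, ha, 1, B.one_mem, mul_one a⟩

lemma right_le_permProd {A B : Subgroup G}
    (h : (A : Set G) * (B : Set G) = (B : Set G) * (A : Set G)) : B ≤ permProd A B h :=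
  fun b hb => ⟨1, A.one_mem, b, hb, one_mul b⟩

lemma card_permProd {A B : Subgroup G}
    (h : (A : Set G) * (B : Set G) = (B : Set G) * (A : Set G)) (hAB : A ⊓ B = ⊥) :
    Nat.card (permProd A B h) = Nat.card A * Nat.card B := by
  have : Nat.card (permProd A B h) =
      Nat.card ((A : Set G) * (B : Set G) : Set G) := rfl
  rw [this, aux_card_mul_of_disjoint hAB]

end Aux2

section Aux3
variable {G : Type*} [Group G]

/-- Key counting lemma: if `H ⊓ N = K` and `H/K` embeds into a cyclic group mod `N`,
with all elements of `H` of order dividing `p`, then `|H : K| = p`. -/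
lemma aux_cyc [Finite G] {p : ℕ} (hp : p.Prime) {P K H N : Subgroup G}
    (hHP : H ≤ P) (hexp : ∀ x : G, x ∈ P → x ≠ 1 → orderOf x = p)
    (hKH : K < H) (hN : N.Normal) (hHN : H ⊓ N = K) (y : G)
    (hle : H ≤ N ⊔ Subgroup.zpowers y) : K.relIndex H = p := by
  classical
  haveI := hN
  set φ := QuotientGroup.mk' N with hφ
  set W := H.map φ with hW
  have hker : (φ.comp H.subtype).ker = K.subgroupOf H := by
    ext g
    rw [MonoidHom.mem_ker, MonoidHom.comp_apply, Subgroup.mem_subgroupOf]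
    rw [Subgroup.coe_subtype]
    rw [hφ, QuotientGroup.mk'_apply, QuotientGroup.eq_one_iff]
    constructor
    · intro hgN
      have : (g : G) ∈ H ⊓ N := Subgroup.mem_inf.mpr ⟨g.2, hgN⟩
      rwa [hHN] at this
    · intro hgK
      have : (g : G) ∈ H ⊓ N := hHN ▸ hgK
      exact (Subgroup.mem_inf.mp this).2
  have hrel : K.relIndex H = Nat.card W := by
    rw [Subgroup.relIndex, Subgroup.index_eq_card, ← hker,
      Nat.card_congr (QuotientGroup.quotientKerEquivRange (φ.comp H.subtype)).toEquiv]
    have : (φ.comp H.subtype).range = W := by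
      rw [MonoidHom.range_comp, Subgroup.range_subtype]
    rw [this]
  have hWle : W ≤ Subgroup.zpowers (φ y) := by
    rw [hW]
    have h1 : H.map φ ≤ (N ⊔ Subgroup.zpowers y).map φ := Subgroup.map_mono hle
    rw [Subgroup.map_sup, MonoidHom.map_zpowers] at h1
    have h2 : N.map φ = ⊥ := by
      rw [Subgroup.map_eq_bot_iff, hφ, QuotientGroup.ker_mk']
    rw [h2, bot_sup_eq] at h1
    exact h1
  have hWp : ∀ w : W, (w : G ⧸ N) ^ p = 1 := by
    rintro ⟨w, hw⟩
    obtain ⟨h, hh, rfl⟩ := Subgroup.mem_map.mp hw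
    rcases eq_or_ne h 1 with rfl | hne
    · simp
    · have hordh := hexp h (hHP hh) hne
      show (φ h) ^ p = 1
      rw [← map_pow, ← hordh, pow_orderOf_eq_one, map_one]
  have hWbot : W ≠ ⊥ := by
    rw [hW, Ne, Subgroup.map_eq_bot_iff, hφ, QuotientGroup.ker_mk']
    intro hle'
    have : H = K := le_antisymm (le_inf le_rfl hle' |>.trans hHN.le) hKH.le
    exact hKH.ne' this
  haveI : IsCyclic (Subgroup.zpowers (φ y)) := aux_isCyclic_zpowers _
  haveI : IsCyclic W := Subgroup.isCyclic_of_le hWle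
  obtain ⟨g, hg⟩ := IsCyclic.exists_generator (α := W)
  have hgp : g ^ p = 1 := by
    apply Subtype.ext
    push_cast
    exact hWp g
  have hgord : orderOf g ∣ p := orderOf_dvd_of_pow_eq_one hgp
  rcases hp.eq_one_or_self_of_dvd _ hgord with h1 | hp'
  · exfalso
    apply hWbot
    have hg1 : g = 1 := orderOf_eq_one_iff.mp h1
    rw [Subgroup.eq_bot_iff_forall]
    intro w hw
    obtain ⟨k, hk⟩ := Subgroup.mem_zpowers_iff.mp (hg ⟨w, hw⟩)
    rw [hg1, one_zpow] at hk
    exact congrArg Subtype.val hk.symm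
  · rw [hrel]
    have h1 : Subgroup.zpowers g = (⊤ : Subgroup W) := (Subgroup.eq_top_iff' _).mpr hg
    have h2 : Nat.card (Subgroup.zpowers g) = orderOf g := Nat.card_zpowers g
    rw [h1, Subgroup.card_top] at h2
    rw [h2, hp']

lemma aux_frattini_bot {H : Type*} [Group H] [Finite H] {p : ℕ} (hp : p.Prime)
    (hc : Nat.card H = p) : frattini H = ⊥ := by
  haveI : Fact (Nat.Prime (Nat.card H)) := ⟨hc ▸ hp⟩
  haveI : Nontrivial H := Finite.one_lt_card_iff_nontrivial.mp (hc ▸ hp.one_lt)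
  refine le_bot_iff.mp (frattini_le_coatom ?_)
  constructor
  · exact bot_ne_top
  · intro b hb
    rcases Subgroup.eq_bot_or_eq_top_of_prime_card b with h | h
    · exact absurd h hb.ne'
    · exact h

lemma aux_sCore_bot [Finite G] {p : ℕ} (hp : p.Prime) {x : G} (hord : orderOf x = p)
    (hns : ¬ IsSPermutable (Subgroup.zpowers x)) : sCore (Subgroup.zpowers x) = ⊥ := by
  apply le_bot_iff.mp
  apply iSup₂_le
  rintro B ⟨hBA, hBS⟩
  have hcA : Nat.card (Subgroup.zpowers x) = p := by rw [Nat.card_zpowers, hord]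
  have hdvd : Nat.card B ∣ p := hcA ▸ Subgroup.card_dvd_of_le hBA
  rcases hp.eq_one_or_self_of_dvd _ hdvd with h | h
  · rw [Subgroup.card_eq_one.mp h]
  · exfalso
    have : B = Subgroup.zpowers x := aux_eq_of_le_of_card_le hBA (by rw [hcA, h])
    exact hns (this ▸ hBS)

lemma aux_supersolvable_of_surjective {G H : Type*} [Group G] [Group H] (f : G →* H)
    (hf : Function.Surjective f) (h : IsSupersolvable G) : IsSupersolvable H := by
  obtain ⟨n, s, h0, hlast, hmono, hnorm, hcyc⟩ := h
  refine ⟨n, fun i => (s i).map f, ?_, ?_, ?_, ?_, ?_⟩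
  · show (s 0).map f = ⊥
    rw [h0, Subgroup.map_bot]
  · show (s (Fin.last n)).map f = ⊤
    rw [hlast, ← MonoidHom.range_eq_map, MonoidHom.range_eq_top.mpr hf]
  · exact fun i j hij => Subgroup.map_mono (hmono hij)
  · exact fun i => (hnorm i).map f hf
  · intro i
    obtain ⟨x, hx⟩ := hcyc i
    refine ⟨f x, ?_⟩
    have := Subgroup.map_mono (f := f) hx
    rwa [Subgroup.map_sup, MonoidHom.map_zpowers] at this

end Aux3
section Aux4
variable {G : Type*} [Group G]

lemma aux_lemmaS [Finite G] {p : ℕ} (hp : p.Prime) {P K H : Subgroup G}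
    (hHP : H ≤ P) (hexp : ∀ x : G, x ∈ P → x ≠ 1 → orderOf x = p)
    (hKn : K.Normal) (hHn : H.Normal) (hKH : K < H)
    (hmax : ∀ L : Subgroup G, L.Normal → K ≤ L → L ≤ H → L = K ∨ L = H)
    (hss : IsSupersolvable G) : K.relIndex H = p := by
  classical
  haveI := hKn; haveI := hHn
  obtain ⟨n, s, h0, hlast, hmono, hnorm, hcyc⟩ := hss
  set u : Fin (n + 1) → Subgroup G := fun i => s i ⊔ K with hu
  have hun : ∀ i, (u i).Normal := fun i => by
    haveI := hnorm i
    exact Subgroup.sup_normal (s i) K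
  have hu0 : H ⊓ u 0 = K := by
    have h00 : u 0 = K := by show s 0 ⊔ K = K; rw [h0, bot_sup_eq]
    rw [h00]
    exact inf_eq_right.mpr hKH.le
  have hjump : ∃ j : Fin n, H ⊓ u j.castSucc = K ∧ H ≤ u j.succ := by
    by_contra hno
    push_neg at hno
    have hall : ∀ i, H ⊓ u i = K := by
      intro i
      induction i using Fin.induction with
      | zero => exact hu0
      | succ i ihi =>
        haveI := hun i.succ
        rcases hmax (H ⊓ u i.succ) (Subgroup.normal_inf_normal H (u i.succ))
            (le_inf hKH.le le_sup_right) inf_le_left with hcase | hcase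
        · exact hcase
        · exact absurd (inf_eq_left.mp hcase) (hno i ihi)
    have hlast' := hall (Fin.last n)
    have htop : u (Fin.last n) = ⊤ := by
      show s (Fin.last n) ⊔ K = ⊤; rw [hlast, top_sup_eq]
    rw [htop, inf_top_eq] at hlast'
    exact hKH.ne' hlast'
  obtain ⟨j, hj1, hj2⟩ := hjump
  obtain ⟨y, hy⟩ := hcyc j
  refine aux_cyc hp hHP hexp hKH (hun j.castSucc) hj1 y ?_
  calc H ≤ u j.succ := hj2
    _ = s j.succ ⊔ K := rfl
    _ ≤ (s j.castSucc ⊔ Subgroup.zpowers y) ⊔ K := sup_le_sup_right hy K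
    _ = (s j.castSucc ⊔ K) ⊔ Subgroup.zpowers y := sup_right_comm _ _ _
    _ = u j.castSucc ⊔ Subgroup.zpowers y := rfl

lemma aux_lemmaB [Finite G] {p : ℕ} (hp : p.Prime)
    (hmin : ∀ q : ℕ, q.Prime → q ∣ Nat.card G → p ≤ q)
    {P K H T : Subgroup G} (hHP : H ≤ P)
    (hKn : K.Normal) (hHn : H.Normal) (hKH : K < H)
    (hmax : ∀ L : Subgroup G, L.Normal → K ≤ L → L ≤ H → L = K ∨ L = H)
    {x : G} (hxH : x ∈ H) (hxT : x ∉ T) (hTind : T.index = p)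
    (ih : ∀ K' H' : Subgroup G, IsChiefFactor K' H' → H' ≤ P →
      Nat.card H' < Nat.card H → K'.relIndex H' = p) :
    K.relIndex H = p := by
  classical
  haveI := hKn; haveI := hHn
  haveI hTn : T.Normal := aux_normal_of_smallest_prime hp hmin hTind
  by_cases hMK : H ⊓ T ≤ K
  · have h1 := Subgroup.relIndex_mul_relIndex (H ⊓ T) K H hMK hKH.le
    have h2 : (H ⊓ T).relIndex H = T.relIndex H := by
      rw [inf_comm, Subgroup.inf_relIndex_right]
    have h3 : T.relIndex H ∣ p := hTind ▸ Subgroup.relIndex_dvd_index_of_normal T H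
    have h4 : K.relIndex H ∣ p := by
      refine dvd_trans ?_ (h2 ▸ h3)
      exact Dvd.intro_left _ h1
    rcases hp.eq_one_or_self_of_dvd _ h4 with h | h
    · exact absurd (Subgroup.relIndex_eq_one.mp h) (not_le_of_gt hKH)
    · exact h
  · set M := H ⊓ T with hM
    haveI hMn : M.Normal := Subgroup.normal_inf_normal H T
    have hMH : M ≤ H := inf_le_left
    have hMKsup : M ⊔ K = H := by
      rcases hmax (M ⊔ K) (Subgroup.sup_normal M K) le_sup_right
          (sup_le hMH hKH.le) with hcase | hcase
      · exact absurd (le_sup_left.trans hcase.le) hMK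
      · exact hcase
    have hMneH : M ≠ H := by
      intro hcase
      apply hxT
      have hHT : H ≤ T := by rw [← hcase]; exact inf_le_right
      exact hHT hxH
    have hMlt : Nat.card M < Nat.card H := aux_card_lt_of_lt hMH hMneH
    have hchief' : IsChiefFactor (K ⊓ M) M := by
      refine ⟨Subgroup.normal_inf_normal K M, hMn, ?_, ?_⟩
      · refine lt_of_le_of_ne inf_le_right ?_
        intro hcase
        exact hMK (by rw [← hcase]; exact inf_le_left)
      · intro L hLn hL1 hL2
        rcases hmax (L ⊔ K) (Subgroup.sup_normal L K) le_sup_right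
            (sup_le (hL2.trans hMH) hKH.le) with hcase | hcase
        · left
          have hLK : L ≤ K := le_sup_left.trans hcase.le
          exact le_antisymm (le_inf hLK hL2) hL1
        · right
          have hmod := aux_modular (K := K) hL2
          rw [hcase] at hmod
          have h5 : M = L ⊔ (M ⊓ K) := by rw [← hmod]; exact (inf_eq_left.mpr hMH).symm
          have h6 : L ⊔ (M ⊓ K) = L := sup_eq_left.mpr (by rw [inf_comm]; exact hL1)
          rw [h5, h6]
    have hIH := ih (K ⊓ M) M hchief' (hMH.trans hHP) hMlt
    calc K.relIndex H = K.relIndex (M ⊔ K) := by rw [hMKsup]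
      _ = K.relIndex M := Subgroup.relIndex_sup_right M K
      _ = (K ⊓ M).relIndex M := (Subgroup.inf_relIndex_right K M).symm
      _ = p := hIH

lemma aux_lemmaGamma [Finite G] {p : ℕ} (hp : p.Prime)
    (hmin : ∀ q : ℕ, q.Prime → q ∣ Nat.card G → p ≤ q)
    {P K H : Subgroup G} (hHP : H ≤ P) (hP : IsPGroup p P)
    (hexp : ∀ x : G, x ∈ P → x ≠ 1 → orderOf x = p)
    (hKn : K.Normal) (hHn : H.Normal) (hKH : K < H)
    (hmax : ∀ L : Subgroup G, L.Normal → K ≤ L → L ≤ H → L = K ∨ L = H)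
    {x : G} (hxH : x ∈ H) (hxK : x ∉ K) (hord : orderOf x = p)
    (S : Sylow p G) (hcomm : ∀ s ∈ (S : Subgroup G), s * x * s⁻¹ * x⁻¹ ∈ K)
    (hsp : IsSPermutable (Subgroup.zpowers x)) :
    K.relIndex H = p := by
  classical
  haveI : Fact p.Prime := ⟨hp⟩
  haveI := hKn; haveI := hHn
  set A := Subgroup.zpowers x with hA
  have hcardA : Nat.card A = p := by rw [hA, Nat.card_zpowers, hord]
  -- every Sylow subgroup for a prime other than p centralizes x
  have hqcomm : ∀ q : ℕ, q.Prime → q ≠ p → ∀ Q : Sylow q G,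
      ∀ g ∈ (Q : Subgroup G), g * x = x * g := by
    intro q hq hqp Q g hg
    haveI : Fact q.Prime := ⟨hq⟩
    by_cases hqdvd : q ∣ Nat.card G
    · have hplt : p < q := lt_of_le_of_ne (hmin q hq hqdvd) (Ne.symm hqp)
      have hcQ : Nat.card (Q : Subgroup G) = q ^ (Nat.card G).factorization q :=
        Q.card_eq_multiplicity
      have hAQ : A ⊓ (Q : Subgroup G) = ⊥ := by
        apply inf_eq_bot_of_coprime
        rw [hcardA, hcQ]
        exact Nat.Coprime.pow_right _ ((Nat.coprime_primes hp hq).mpr (Ne.symm hqp))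
      set R := permProd A (Q : Subgroup G) (hsp q hq Q) with hR
      have hAR : A ≤ R := left_le_permProd _
      have hQR : (Q : Subgroup G) ≤ R := right_le_permProd _
      have hcardR : Nat.card R = p * Nat.card (Q : Subgroup G) := by
        rw [hR, card_permProd _ hAQ, hcardA]
      have hQsub : Nat.card ((Q : Subgroup G).subgroupOf R) = Nat.card (Q : Subgroup G) :=
        Nat.card_congr (Subgroup.subgroupOfEquivOfLe hQR).toEquiv
      have hind : ((Q : Subgroup G).subgroupOf R).index = p := by
        have h2 := Subgroup.index_mul_card ((Q : Subgroup G).subgroupOf R)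
        rw [hQsub, hcardR] at h2
        exact Nat.eq_of_mul_eq_mul_right Nat.card_pos h2
      have hminR : ∀ r : ℕ, r.Prime → r ∣ Nat.card R → p ≤ r := by
        intro r hr hrdvd
        rw [hcardR] at hrdvd
        rcases (Nat.Prime.dvd_mul hr).mp hrdvd with hcase | hcase
        · rw [(Nat.prime_dvd_prime_iff_eq hr hp).mp hcase]
        · exact hmin r hr (hcase.trans (Subgroup.card_subgroup_dvd_card _))
      haveI hQnormal : ((Q : Subgroup G).subgroupOf R).Normal :=
        aux_normal_of_smallest_prime hp hminR hind
      have hxR : x ∈ R := hAR (Subgroup.mem_zpowers x)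
      have hgR : g ∈ R := hQR hg
      have hconj : x * g * x⁻¹ ∈ (Q : Subgroup G) := by
        have hmem := hQnormal.conj_mem ⟨g, hgR⟩ (Subgroup.mem_subgroupOf.mpr hg) ⟨x, hxR⟩
        simpa [Subgroup.mem_subgroupOf] using hmem
      have hHQ : H ⊓ (Q : Subgroup G) = ⊥ := by
        apply inf_eq_bot_of_coprime
        obtain ⟨a, ha⟩ := (hP.to_le hHP).exists_card_eq
        rw [ha, hcQ]
        exact Nat.Coprime.pow _ _ ((Nat.coprime_primes hp hq).mpr (Ne.symm hqp))
      have hc : x * g * x⁻¹ * g⁻¹ ∈ H ⊓ (Q : Subgroup G) := by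
        refine Subgroup.mem_inf.mpr ⟨?_, Subgroup.mul_mem _ hconj (Subgroup.inv_mem _ hg)⟩
        rw [show x * g * x⁻¹ * g⁻¹ = x * (g * x⁻¹ * g⁻¹) by group]
        exact H.mul_mem hxH (hHn.conj_mem _ (H.inv_mem hxH) g)
      rw [hHQ, Subgroup.mem_bot] at hc
      have e1 : x * g * x⁻¹ = g := by rwa [mul_inv_eq_one] at hc
      have h2 : x * g = g * x := by
        calc x * g = (x * g * x⁻¹) * x := by group
        _ = g * x := by rw [e1]
      exact h2.symm
    · have hQbot : (Q : Subgroup G) = ⊥ := by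
        apply Subgroup.card_eq_one.mp
        have := Q.card_eq_multiplicity
        rwa [Nat.factorization_eq_zero_of_not_dvd hqdvd, pow_zero] at this
      rw [hQbot, Subgroup.mem_bot] at hg
      subst hg; simp
  -- the subgroup L = <x> ⊔ K is normal in G
  set L := A ⊔ K with hL
  have hconjL : ∀ g : G, g * x * g⁻¹ * x⁻¹ ∈ K → ∀ h ∈ L, g * h * g⁻¹ ∈ L := by
    intro g hgx h hh
    rw [hL, ← SetLike.mem_coe, Subgroup.mul_normal] at hh
    obtain ⟨a, ha, k, hk, rfl⟩ := hh
    have hgxL : g * x * g⁻¹ ∈ L := by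
      rw [show g * x * g⁻¹ = g * x * g⁻¹ * x⁻¹ * x by group]
      exact L.mul_mem (Subgroup.mem_sup_right hgx) (Subgroup.mem_sup_left (Subgroup.mem_zpowers x))
    have hgaL : g * a * g⁻¹ ∈ L := by
      obtain ⟨m, hm⟩ := Subgroup.mem_zpowers_iff.mp ha
      rw [← hm, show g * x ^ m * g⁻¹ = (g * x * g⁻¹) ^ m by
        have := map_zpow (MulAut.conj g) x m
        simpa [MulAut.conj_apply] using this.symm]
      exact L.zpow_mem hgxL m
    have hgkL : g * k * g⁻¹ ∈ L := Subgroup.mem_sup_right (hKn.conj_mem k hk g)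
    rw [show g * (a * k) * g⁻¹ = (g * a * g⁻¹) * (g * k * g⁻¹) by group]
    exact L.mul_mem hgaL hgkL
  have hSnorm : (S : Subgroup G) ≤ normalizer (L : Set G) := by
    intro s hs
    refine aux_mem_normalizer (hconjL s (hcomm s hs)) ?_
    intro h hh
    have := hconjL s⁻¹ (hcomm s⁻¹ ((S : Subgroup G).inv_mem hs)) h hh
    simpa using this
  have hQnormAll : ∀ q : ℕ, q.Prime → q ≠ p → ∀ Q : Sylow q G,
      (Q : Subgroup G) ≤ normalizer (L : Set G) := by
    intro q hq hqp Q g hg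
    have hcom : Commute g x := hqcomm q hq hqp Q g hg
    have hgx : g * x * g⁻¹ * x⁻¹ ∈ K := by
      have h1 : g * x * g⁻¹ * x⁻¹ = 1 := by rw [hcom.eq]; group
      rw [h1]; exact K.one_mem
    refine aux_mem_normalizer (hconjL g hgx) ?_
    intro h hh
    have hgx' : g⁻¹ * x * g⁻¹⁻¹ * x⁻¹ ∈ K := by
      have h1 : g⁻¹ * x * g⁻¹⁻¹ * x⁻¹ = 1 := by rw [hcom.inv_left.eq]; group
      rw [h1]; exact K.one_mem
    have := hconjL g⁻¹ hgx' h hh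
    simpa using this
  have hNtop : normalizer (L : Set G) = ⊤ := by
    apply aux_eq_top_of_sylows
    intro q hq hqdvd
    by_cases hqp : q = p
    · subst hqp; exact ⟨S, hSnorm⟩
    · haveI : Fact q.Prime := ⟨hq⟩
      obtain ⟨Q⟩ := (Sylow.nonempty : Nonempty (Sylow q G))
      exact ⟨Q, hQnormAll q hq hqp Q⟩
  haveI hLnormal : L.Normal := Subgroup.normalizer_eq_top_iff.mp hNtop
  have hLK : L ≠ K := fun hcase =>
    hxK (hcase ▸ Subgroup.mem_sup_left (Subgroup.mem_zpowers x))
  have hLH : L = H := by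
    rcases hmax L hLnormal le_sup_right (sup_le (Subgroup.zpowers_le.mpr hxH) hKH.le)
      with hcase | hcase
    · exact absurd hcase hLK
    · exact hcase
  refine aux_cyc hp hHP hexp hKH hKn (inf_eq_right.mpr hKH.le) x ?_
  have hfin : H = K ⊔ A := by rw [← hLH, hL, sup_comm]
  exact hfin.le

end Aux4
theorem stmt8 {G : Type*} [Group G] [Finite G] (p : ℕ) (hp : p.Prime)
    (hdvd : p ∣ Nat.card G) (hmin : ∀ q : ℕ, q.Prime → q ∣ Nat.card G → p ≤ q)
    (P : Subgroup G) [P.Normal] (hP : IsPGroup p P) (hPne : P ≠ ⊥)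
    (hexp : ∀ x : G, x ∈ P → x ≠ 1 → orderOf x = p)
    (hsupp : ∀ x : G, x ∈ P → orderOf x = p →
      ¬ (∃ T : Subgroup G, IsSupersolvable T ∧
          ((Subgroup.zpowers x : Subgroup G) : Set G) * (T : Set G) = Set.univ) →
      WeaklySPhiSupplemented (Subgroup.zpowers x)) :
    ∀ K H : Subgroup G, IsChiefFactor K H → H ≤ P → K.relIndex H = p := by
  classical
  haveI : Fact p.Prime := ⟨hp⟩
  suffices hmain : ∀ n : ℕ, ∀ K H : Subgroup G, IsChiefFactor K H → H ≤ P →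
      Nat.card H ≤ n → K.relIndex H = p by
    intro K H h1 h2
    exact hmain (Nat.card H) K H h1 h2 le_rfl
  intro n
  induction n with
  | zero =>
    intro K H _ _ h3
    have : 0 < Nat.card H := Nat.card_pos
    omega
  | succ n ih =>
    intro K H hchief hHP hcard
    obtain ⟨hKnorm, hHnorm, hKH, hmax⟩ := hchief
    haveI := hKnorm; haveI := hHnorm
    have hHp : IsPGroup p H := hP.to_le hHP
    obtain ⟨S, hHS⟩ := hHp.exists_le_sylow
    -- choose x ∈ H \ K whose image is central in the image of S mod K
    set φ := QuotientGroup.mk' K with hφ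
    have hφsurj : Function.Surjective φ := QuotientGroup.mk'_surjective K
    have hSbar : IsPGroup p ((S : Subgroup G).map φ) := S.isPGroup'.map φ
    have hHbar_le : H.map φ ≤ (S : Subgroup G).map φ := Subgroup.map_mono hHS
    haveI hHbarnorm : (H.map φ).Normal := hHnorm.map φ hφsurj
    have hHbarbot : H.map φ ≠ ⊥ := by
      rw [Ne, Subgroup.map_eq_bot_iff, hφ, QuotientGroup.ker_mk']
      intro hle
      exact hKH.ne' (le_antisymm hle hKH.le)
    obtain ⟨zbar, hzN, hz1, hzcomm⟩ :=
      aux_exists_comm_elt hp hSbar hHbar_le hHbarnorm hHbarbot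
    obtain ⟨x, hxH, hxz⟩ := Subgroup.mem_map.mp hzN
    have hxK : x ∉ K := by
      intro hmem
      apply hz1
      rw [← hxz, hφ, QuotientGroup.mk'_apply]
      exact (QuotientGroup.eq_one_iff x).mpr hmem
    have hx1 : x ≠ 1 := by rintro rfl; exact hxK K.one_mem
    have hxP : x ∈ P := hHP hxH
    have hord : orderOf x = p := hexp x hxP hx1
    have hcomm : ∀ s ∈ (S : Subgroup G), s * x * s⁻¹ * x⁻¹ ∈ K := by
      intro s hs
      have h1 : φ (s * x * s⁻¹ * x⁻¹) = 1 := by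
        have h2 := hzcomm (φ s) (Subgroup.mem_map_of_mem φ hs)
        rw [← hxz] at h2
        simp only [map_mul, map_inv]
        rw [h2]
        simp
      rwa [hφ, QuotientGroup.mk'_apply, QuotientGroup.eq_one_iff] at h1
    set A := Subgroup.zpowers x with hA
    have hcardA : Nat.card A = p := by rw [hA, Nat.card_zpowers, hord]
    have hxA : x ∈ A := Subgroup.mem_zpowers x
    have ih' : ∀ K' H' : Subgroup G, IsChiefFactor K' H' → H' ≤ P →
        Nat.card H' < Nat.card H → K'.relIndex H' = p := by
      intro K' H' h1 h2 h3
      exact ih K' H' h1 h2 (by omega)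
    -- treat a supplement with trivial intersection via lemma B
    have hcaseB : ∀ T : Subgroup G, A ⊓ T = ⊥ →
        (A : Set G) * (T : Set G) = Set.univ → K.relIndex H = p := by
      intro T hAT hTprod
      have hxT : x ∉ T := by
        intro hmem
        have hmm : x ∈ A ⊓ T := Subgroup.mem_inf.mpr ⟨hxA, hmem⟩
        rw [hAT, Subgroup.mem_bot] at hmm
        exact hx1 hmm
      have hTind : T.index = p := aux_index_eq_of_prod hTprod hAT hcardA
      exact aux_lemmaB hp hmin hHP hKnorm hHnorm hKH hmax hxH hxT hTind ih'
    by_cases hss : ∃ T : Subgroup G, IsSupersolvable T ∧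
        ((Subgroup.zpowers x : Subgroup G) : Set G) * (T : Set G) = Set.univ
    · obtain ⟨T, hTss, hTprod⟩ := hss
      by_cases hAT : A ⊓ T = ⊥
      · exact hcaseB T hAT hTprod
      · -- T must be the whole group, which is then supersolvable
        have hcd : Nat.card (A ⊓ T : Subgroup G) ∣ p := hcardA ▸ Subgroup.card_dvd_of_le inf_le_left
        have hAleT : A ≤ T := by
          rcases hp.eq_one_or_self_of_dvd _ hcd with h | h
          · exact absurd (Subgroup.card_eq_one.mp h) hAT
          · have heq : A ⊓ T = A :=
              aux_eq_of_le_of_card_le inf_le_left (by rw [hcardA, h])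
            exact inf_eq_left.mp heq
        have hTtop : T = ⊤ := by
          rw [Subgroup.eq_top_iff']
          intro g
          have hg : g ∈ ((Subgroup.zpowers x : Subgroup G) : Set G) * (T : Set G) := by
            rw [hTprod]; trivial
          obtain ⟨a, ha, t, ht, rfl⟩ := hg
          exact T.mul_mem (hAleT ha) ht
        subst hTtop
        have hGss : IsSupersolvable G :=
          aux_supersolvable_of_surjective (Subgroup.topEquiv : (⊤ : Subgroup G) ≃* G).toMonoidHom
            (Subgroup.topEquiv : (⊤ : Subgroup G) ≃* G).surjective hTss
        exact aux_lemmaS hp hHP hexp hKnorm hHnorm hKH hmax hGss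
    · obtain ⟨T, hTprod, hTint⟩ := hsupp x hxP hord hss
      by_cases hsp : IsSPermutable A
      · exact aux_lemmaGamma hp hmin hHP hP hexp hKnorm hHnorm hKH hmax hxH hxK hord
          S hcomm hsp
      · have hATbot : A ⊓ T = ⊥ := by
          have hfr : (frattini A).map A.subtype = ⊥ := by
            rw [aux_frattini_bot hp hcardA, Subgroup.map_bot]
          have hsc : sCore A = ⊥ := aux_sCore_bot hp hord hsp
          rw [hfr, hsc, sup_bot_eq] at hTint
          exact le_bot_iff.mp hTint
        exact hcaseB T hATbot hTprod
end

section
/- Let G be a finite group with a normal p-subgroup P such that P ≤ Z(G). Then F*(G/P) = F*(G)/P, where F* denotes the generalized Fitting subgroup. -/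
open scoped Pointwise

section AuxDev

open Subgroup

variable {G : Type*} [Group G]

/-- Inductive reformulation of subnormality. -/
inductive SubN {G : Type*} [Group G] : Subgroup G → Prop
  | top : SubN ⊤
  | step {H K : Subgroup G} : H ≤ K → ((H.subgroupOf K)).Normal → SubN K → SubN H

lemma subN_of_chain : ∀ (n : ℕ) (s : Fin (n + 1) → Subgroup G), s (Fin.last n) = ⊤ →
    (∀ i : Fin n, s i.castSucc ≤ s i.succ ∧ ((s i.castSucc).subgroupOf (s i.succ)).Normal) →
    SubN (s 0) := by
  intro n
  induction n with
  | zero =>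
    intro s hl _
    have : (0 : Fin 1) = Fin.last 0 := rfl
    rw [this, hl]; exact SubN.top
  | succ n ih =>
    intro s hl hstep
    have hK : SubN (s ((0 : Fin (n + 1)).succ)) := by
      have h2 : ∀ i : Fin n, (fun i : Fin (n+1) => s i.succ) i.castSucc ≤
          (fun i : Fin (n+1) => s i.succ) i.succ ∧
          (((fun i : Fin (n+1) => s i.succ) i.castSucc).subgroupOf
            ((fun i : Fin (n+1) => s i.succ) i.succ)).Normal := by
        intro i
        simp only [Fin.succ_castSucc]
        exact hstep i.succ
      have h1 : (fun i : Fin (n+1) => s i.succ) (Fin.last n) = ⊤ := by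
        simp only [Fin.succ_last]; exact hl
      exact ih (fun i => s i.succ) h1 h2
    have h0 := hstep 0
    rw [Fin.castSucc_zero] at h0
    exact SubN.step h0.1 h0.2 hK

lemma subN_iff_isSubnormal {H : Subgroup G} : SubN H ↔ IsSubnormalSubgroup H := by
  constructor
  · intro h
    induction h with
    | top => exact ⟨0, fun _ => ⊤, rfl, rfl, fun i => i.elim0⟩
    | @step H K hHK hnorm _ ih =>
      obtain ⟨n, s, h0, hl, hstep⟩ := ih
      refine ⟨n + 1, Fin.cases H s, Fin.cases_zero .., ?_, ?_⟩
      · have h1 : Fin.last (n + 1) = (Fin.last n).succ := rfl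
        rw [h1]
        simp only [Fin.cases_succ]
        exact hl
      · intro i
        induction i using Fin.cases with
        | zero =>
          simp only [Fin.castSucc_zero, Fin.succ_zero_eq_one]
          have h1 : (1 : Fin (n + 2)) = (0 : Fin (n + 1)).succ := rfl
          show H ≤ s 0 ∧ (H.subgroupOf (s 0)).Normal
          rw [h0]
          exact ⟨hHK, hnorm⟩
        | succ j =>
          simp only [← Fin.succ_castSucc, Fin.cases_succ]
          exact hstep j
  · rintro ⟨n, s, h0, hl, hstep⟩
    rw [← h0]
    exact subN_of_chain n s hl hstep

lemma SubN.map {G' : Type*} [Group G'] {H : Subgroup G} (f : G →* G')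
    (hf : Function.Surjective f) (h : SubN H) : SubN (H.map f) := by
  induction h with
  | top => rw [Subgroup.map_top_of_surjective f hf]; exact SubN.top
  | @step A B hAB hnorm _ ih =>
    refine SubN.step (Subgroup.map_mono hAB) ?_ ih
    rw [Subgroup.normal_subgroupOf_iff (Subgroup.map_mono hAB)]
    rintro h k ⟨a, ha, rfl⟩ ⟨b, hb, rfl⟩
    have : f b * f a * (f b)⁻¹ = f (b * a * b⁻¹) := by simp
    rw [this]
    exact Subgroup.mem_map_of_mem f
      ((Subgroup.normal_subgroupOf_iff hAB).mp hnorm a b ha hb)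

lemma SubN.comap {G' : Type*} [Group G'] {H : Subgroup G'} (f : G →* G')
    (h : SubN H) : SubN (H.comap f) := by
  induction h with
  | top => rw [Subgroup.comap_top]; exact SubN.top
  | @step A B hAB hnorm _ ih =>
    refine SubN.step (Subgroup.comap_mono hAB) ?_ ih
    rw [Subgroup.normal_subgroupOf_iff (Subgroup.comap_mono hAB)]
    intro h k hh hk
    rw [Subgroup.mem_comap] at *
    have : f (k * h * k⁻¹) = f k * f h * (f k)⁻¹ := by simp
    rw [this]
    exact (Subgroup.normal_subgroupOf_iff hAB).mp hnorm _ _ hh hk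

lemma conj_map_self {A : Subgroup G} {a : G} (ha : a ∈ A) :
    Subgroup.map (MulAut.conj a).toMonoidHom A = A := by
  ext x
  constructor
  · rintro ⟨y, hy, rfl⟩
    simpa using mul_mem (mul_mem ha hy) (inv_mem ha)
  · intro hx
    exact ⟨a⁻¹ * x * a, mul_mem (mul_mem (inv_mem ha) hx) ha, by
      simp [mul_assoc]⟩

lemma commutator_self_le (A : Subgroup G) : ⁅A, A⁆ ≤ A := by
  rw [Subgroup.commutator_le]
  intro a ha b hb
  rw [commutatorElement_def]
  exact mul_mem (mul_mem (mul_mem ha hb) (inv_mem ha)) (inv_mem hb)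

lemma commutator_subgroupOf_normal (A : Subgroup G) :
    ((⁅A, A⁆).subgroupOf A).Normal := by
  rw [Subgroup.normal_subgroupOf_iff (commutator_self_le A)]
  intro h a hh ha
  have e : a * h * a⁻¹ = (MulAut.conj a).toMonoidHom h := by simp
  rw [e]
  have := Subgroup.mem_map_of_mem (MulAut.conj a).toMonoidHom hh
  rwa [Subgroup.map_commutator, conj_map_self ha] at this

/-- derived chain of a subgroup -/
def derivedChain (A : Subgroup G) : ℕ → Subgroup G
  | 0 => A
  | (k + 1) => ⁅derivedChain A k, derivedChain A k⁆

lemma derivedChain_antitone (A : Subgroup G) (k : ℕ) :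
    derivedChain A (k + 1) ≤ derivedChain A k :=
  commutator_self_le _

lemma SubN.derivedChain {A : Subgroup G} (h : SubN A) (k : ℕ) :
    SubN (derivedChain A k) := by
  induction k with
  | zero => exact h
  | succ k ih => exact SubN.step (commutator_self_le _) (commutator_subgroupOf_normal _) ih

lemma exists_succ_eq [Finite G] (D : ℕ → Subgroup G) (hD : ∀ k, D (k + 1) ≤ D k) :
    ∃ k, D (k + 1) = D k := by
  by_contra hc
  push_neg at hc
  have hlt : ∀ k, Nat.card (D (k + 1)) < Nat.card (D k) := by
    intro k
    rcases lt_or_ge (Nat.card (D (k + 1))) (Nat.card (D k)) with h | h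
    · exact h
    · exact absurd (Subgroup.eq_of_le_of_card_ge (hD k) h) (hc k)
  have key : ∀ n, Nat.card (D n) + n ≤ Nat.card (D 0) := by
    intro n
    induction n with
    | zero => simp
    | succ n ih => have := hlt n; omega
  have := key (Nat.card (D 0) + 1)
  omega

lemma map_center_le_center {H K : Type*} [Group H] [Group K] (f : H →* K)
    (hf : Function.Surjective f) {z : H} (hz : z ∈ Subgroup.center H) :
    f z ∈ Subgroup.center K := by
  rw [Subgroup.mem_center_iff] at *
  intro k
  obtain ⟨h, rfl⟩ := hf k
  rw [← map_mul, ← map_mul, hz]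

lemma subsingleton_of_commutator_top_of_comm {K : Type*} [Group K]
    (hperf : commutator K = ⊤) (hcomm : ∀ k : K, k ∈ Subgroup.center K) :
    Subsingleton K := by
  have hbot : commutator K = ⊥ := by
    rw [commutator_def, Subgroup.commutator_eq_bot_iff_le_centralizer]
    intro g _
    rw [Subgroup.mem_centralizer_iff]
    intro h _
    exact Subgroup.mem_center_iff.mp (hcomm h) g |>.symm ▸ rfl
  refine ⟨fun a b => ?_⟩
  have ha : a ∈ (⊥ : Subgroup K) := by rw [← hbot, hperf]; exact Subgroup.mem_top a
  have hb : b ∈ (⊥ : Subgroup K) := by rw [← hbot, hperf]; exact Subgroup.mem_top b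
  rw [Subgroup.mem_bot] at ha hb
  rw [ha, hb]

lemma isQuasisimple_of_surjective {H K : Type*} [Group H] [Group K] (f : H →* K)
    (hf : Function.Surjective f) (hker : f.ker ≤ Subgroup.center H)
    (hH : IsQuasisimple H) : IsQuasisimple K := by
  obtain ⟨hperf, hsimple⟩ := hH
  have hperfK : commutator K = ⊤ := by
    rw [commutator_def, ← Subgroup.map_top_of_surjective f hf, ← Subgroup.map_commutator,
      ← commutator_def, hperf, Subgroup.map_top_of_surjective f hf]
  refine ⟨hperfK, ?_⟩
  haveI := hsimple
  have hnt : Nontrivial (K ⧸ Subgroup.center K) := by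
    by_contra hn
    rw [not_nontrivial_iff_subsingleton] at hn
    have hcen : ∀ k : K, k ∈ Subgroup.center K := fun k =>
      (QuotientGroup.eq_one_iff k).mp (Subsingleton.elim _ _)
    haveI hKsub : Subsingleton K := subsingleton_of_commutator_top_of_comm hperfK hcen
    have hHab : ∀ h : H, h ∈ Subgroup.center H := fun h =>
      hker (by rw [MonoidHom.mem_ker]; exact Subsingleton.elim _ _)
    haveI hHsub : Subsingleton H := subsingleton_of_commutator_top_of_comm hperf hHab
    haveI : Subsingleton (H ⧸ Subgroup.center H) := by
      refine ⟨fun a b => ?_⟩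
      obtain ⟨x, rfl⟩ := QuotientGroup.mk_surjective a
      obtain ⟨y, rfl⟩ := QuotientGroup.mk_surjective b
      rw [Subsingleton.elim x y]
    exact false_of_nontrivial_of_subsingleton (H ⧸ Subgroup.center H)
  haveI := hnt
  set ψ : H →* K ⧸ Subgroup.center K := (QuotientGroup.mk' (Subgroup.center K)).comp f with hψdef
  have hψ : Function.Surjective ψ := (QuotientGroup.mk'_surjective _).comp hf
  have hZle : ∀ z ∈ Subgroup.center H, ψ z = 1 := by
    intro z hz
    have : f z ∈ Subgroup.center K := map_center_le_center f hf hz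
    simpa [hψdef, QuotientGroup.eq_one_iff] using this
  let φ := QuotientGroup.lift (Subgroup.center H) ψ hZle
  have hφsurj : Function.Surjective φ := by
    intro y
    obtain ⟨h, rfl⟩ := hψ y
    exact ⟨QuotientGroup.mk h, rfl⟩
  exact IsSimpleGroup.isSimpleGroup_of_surjective φ hφsurj

open scoped commutatorElement in
lemma isQuasisimple_of_quotient {H K : Type*} [Group H] [Group K] (f : H →* K)
    (hf : Function.Surjective f) (hker : f.ker ≤ Subgroup.center H)
    (hperf : commutator H = ⊤) (hK : IsQuasisimple K) : IsQuasisimple H := by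
  obtain ⟨-, hsimple⟩ := hK
  refine ⟨hperf, ?_⟩
  have grun : (Subgroup.center K).comap f ≤ Subgroup.center H := by
    intro w hw
    rw [Subgroup.mem_comap] at hw
    have hcomm : ∀ h : H, ⁅w, h⁆ ∈ Subgroup.center H := by
      intro h
      apply hker
      rw [MonoidHom.mem_ker, map_commutatorElement]
      exact commutatorElement_eq_one_iff_mul_comm.mpr
        (Subgroup.mem_center_iff.mp hw (f h)).symm
    let φ : H →* ↥(Subgroup.center H) :=
      { toFun := fun h => ⟨⁅w, h⁆, hcomm h⟩
        map_one' := Subtype.ext (commutatorElement_one_right w)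
        map_mul' := fun a b => Subtype.ext (by
          show ⁅w, a * b⁆ = ⁅w, a⁆ * ⁅w, b⁆
          have hc : a * ⁅w, b⁆ * a⁻¹ = ⁅w, b⁆ := by
            have h1 := Subgroup.mem_center_iff.mp (hcomm b) a
            rw [h1, mul_assoc, mul_inv_cancel, mul_one]
          calc ⁅w, a * b⁆ = ⁅w, a⁆ * (a * ⁅w, b⁆ * a⁻¹) := by
                simp only [commutatorElement_def]; group
            _ = ⁅w, a⁆ * ⁅w, b⁆ := by rw [hc]) }
    have hker_top : commutator H ≤ φ.ker := by
      rw [commutator_eq_closure]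
      rw [Subgroup.closure_le]
      rintro x ⟨a, b, rfl⟩
      rw [SetLike.mem_coe, MonoidHom.mem_ker, map_commutatorElement]
      exact commutatorElement_eq_one_iff_mul_comm.mpr (Subtype.ext (Subgroup.mem_center_iff.mp (φ b).2 (φ a)))
    rw [hperf] at hker_top
    have hone : ∀ h : H, ⁅w, h⁆ = 1 := by
      intro h
      have h1 : φ h = 1 := hker_top (Subgroup.mem_top h)
      exact congrArg Subtype.val h1
    exact Subgroup.mem_center_iff.mpr fun g =>
      (commutatorElement_eq_one_iff_mul_comm.mp (hone g)).symm
  have grun' : (Subgroup.center K).comap f = Subgroup.center H :=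
    le_antisymm grun fun z hz => Subgroup.mem_comap.mpr (map_center_le_center f hf hz)
  set ψ : H →* K ⧸ Subgroup.center K := (QuotientGroup.mk' (Subgroup.center K)).comp f
    with hψdef
  have hψ : Function.Surjective ψ := (QuotientGroup.mk'_surjective _).comp hf
  have hkerψ : ψ.ker = Subgroup.center H := by
    rw [hψdef, ← MonoidHom.comap_ker, QuotientGroup.ker_mk', grun']
  have e : (H ⧸ Subgroup.center H) ≃* (K ⧸ Subgroup.center K) :=
    (QuotientGroup.quotientMulEquivOfEq hkerψ.symm).trans
      (QuotientGroup.quotientKerEquivOfSurjective ψ hψ)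
  haveI := hsimple
  haveI : Nontrivial (H ⧸ Subgroup.center H) := e.toEquiv.nontrivial
  exact IsSimpleGroup.isSimpleGroup_of_surjective e.symm.toMonoidHom e.symm.surjective

lemma map_subtype_commutator (A : Subgroup G) :
    Subgroup.map A.subtype (commutator ↥A) = ⁅A, A⁆ := by
  rw [commutator_def, Subgroup.map_commutator]
  congr 1 <;>
  · rw [← MonoidHom.range_eq_map, Subgroup.subtype_range]

lemma perfect_subgroup_iff (A : Subgroup G) : commutator ↥A = ⊤ ↔ ⁅A, A⁆ = A := by
  constructor
  · intro h
    rw [← _root_.map_subtype_commutator, h, ← MonoidHom.range_eq_map, Subgroup.subtype_range]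
  · intro h
    apply Subgroup.map_injective A.subtype_injective
    rw [_root_.map_subtype_commutator, h, ← MonoidHom.range_eq_map, Subgroup.subtype_range]

lemma mem_center_subgroup {A : Subgroup G} {x : ↥A} (hx : (x : G) ∈ Subgroup.center G) :
    x ∈ Subgroup.center ↥A := by
  rw [Subgroup.mem_center_iff]
  intro g
  exact Subtype.ext (Subgroup.mem_center_iff.mp hx (g : G))

lemma le_biSup_self {S : Set (Subgroup G)} {H : Subgroup G} (h : H ∈ S) :
    H ≤ ⨆ K ∈ S, K :=
  le_iSup₂ (f := fun (K : Subgroup G) (_ : K ∈ S) => K) H h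

end AuxDev

theorem stmt11 {G : Type*} [Group G] [Finite G] (p : ℕ) (P : Subgroup G) [P.Normal]
    (hP : IsPGroup p P) (hZ : P ≤ Subgroup.center G) :
    genFitting (G ⧸ P) = (genFitting G).map (QuotientGroup.mk' P) := by
  set π := QuotientGroup.mk' P with hπdef
  have hπs : Function.Surjective π := QuotientGroup.mk'_surjective P
  have hkerπ : π.ker = P := QuotientGroup.ker_mk' P
  have hkerc : ∀ E : Subgroup G, (π.subgroupMap E).ker ≤ Subgroup.center ↥E := by
    intro E x hx
    have h1 : π (x : G) = 1 := congrArg Subtype.val hx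
    have h2 : (x : G) ∈ P := by rw [← hkerπ]; exact h1
    exact mem_center_subgroup (hZ h2)
  apply le_antisymm
  · rw [genFitting]
    apply sup_le
    · rw [layer]
      apply iSup₂_le
      rintro D ⟨hsubD, hqsD⟩
      set C := Subgroup.comap π D with hCdef
      have hCsub : SubN C := SubN.comap π (subN_iff_isSubnormal.mpr hsubD)
      have hCmap : Subgroup.map π C = D := Subgroup.map_comap_eq_self_of_surjective hπs D
      have hperfD : ⁅D, D⁆ = D := (perfect_subgroup_iff D).mp hqsD.1
      have hmapDC : ∀ k, Subgroup.map π (derivedChain C k) = D := by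
        intro k
        induction k with
        | zero => exact hCmap
        | succ k ih =>
          show Subgroup.map π ⁅derivedChain C k, derivedChain C k⁆ = D
          rw [Subgroup.map_commutator, ih, hperfD]
      obtain ⟨k, hk⟩ := exists_succ_eq (derivedChain C) (derivedChain_antitone C)
      set E := derivedChain C k with hEdef
      have hperfE : ⁅E, E⁆ = E := hk
      have hEsub : SubN E := hCsub.derivedChain k
      have hEmap : Subgroup.map π E = D := hmapDC k
      have hqsE : IsQuasisimple ↥E := by
        apply isQuasisimple_of_quotient (π.subgroupMap E) (π.subgroupMap_surjective E)
          (hkerc E) ((perfect_subgroup_iff E).mpr hperfE)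
        rw [hEmap]
        exact hqsD
      calc D = Subgroup.map π E := hEmap.symm
        _ ≤ Subgroup.map π (layer G) := Subgroup.map_mono
            (le_biSup_self ⟨subN_iff_isSubnormal.mp hEsub, hqsE⟩)
        _ ≤ Subgroup.map π (genFitting G) := Subgroup.map_mono le_sup_left
    · rw [fittingSubgroup]
      apply iSup₂_le
      rintro N ⟨hNnorm, hNnil⟩
      set K := Subgroup.comap π N with hKdef
      have hKmap : Subgroup.map π K = N := Subgroup.map_comap_eq_self_of_surjective hπs N
      have hKnorm : K.Normal := hNnorm.comap π
      have hKnil : Group.IsNilpotent ↥K := by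
        haveI := hNnil
        refine isNilpotent_of_ker_le_center
          ((π.comp K.subtype).codRestrict N fun x => ?_) ?_
        · exact x.2
        · intro x hx
          have h1 : π (x : G) = 1 := congrArg Subtype.val hx
          have h2 : (x : G) ∈ P := by rw [← hkerπ]; exact h1
          exact mem_center_subgroup (hZ h2)
      calc N = Subgroup.map π K := hKmap.symm
        _ ≤ Subgroup.map π (fittingSubgroup G) := Subgroup.map_mono
            (le_biSup_self ⟨hKnorm, hKnil⟩)
        _ ≤ Subgroup.map π (genFitting G) := Subgroup.map_mono le_sup_right
  · have hlay : Subgroup.map π (layer G) ≤ layer (G ⧸ P) := by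
      rw [layer, layer, Subgroup.map_iSup]
      apply iSup_le
      intro C
      rw [Subgroup.map_iSup]
      apply iSup_le
      rintro ⟨hsub, hqs⟩
      exact le_biSup_self
        ⟨subN_iff_isSubnormal.mp (SubN.map π hπs (subN_iff_isSubnormal.mpr hsub)),
          isQuasisimple_of_surjective (π.subgroupMap C) (π.subgroupMap_surjective C)
            (hkerc C) hqs⟩
    have hfit : Subgroup.map π (fittingSubgroup G) ≤ fittingSubgroup (G ⧸ P) := by
      rw [fittingSubgroup, fittingSubgroup, Subgroup.map_iSup]
      apply iSup_le
      intro H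
      rw [Subgroup.map_iSup]
      apply iSup_le
      rintro ⟨hn, hnil⟩
      refine le_biSup_self ⟨hn.map π hπs, ?_⟩
      haveI := hnil
      exact nilpotent_of_surjective (π.subgroupMap H) (π.subgroupMap_surjective H)
    rw [genFitting, genFitting, Subgroup.map_sup]
    exact sup_le (hlay.trans le_sup_left) (hfit.trans le_sup_right)
end

section
/- Let G be a finite group and N a normal subgroup of G. Then F*(N) = N ∩ F*(G), where F* denotes the generalized Fitting subgroup. -/
open scoped Pointwise

open Subgroup
open scoped commutatorElement

namespace FStarAux

variable {G : Type*} [Group G]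

/-- Lower central series of a subgroup, computed inside the ambient group. -/
def lcsIn (L : Subgroup G) : ℕ → Subgroup G
  | 0 => L
  | n + 1 => ⁅lcsIn L n, L⁆

theorem lcsIn_mono {A B : Subgroup G} (h : A ≤ B) : ∀ n, lcsIn A n ≤ lcsIn B n
  | 0 => h
  | n + 1 => commutator_mono (lcsIn_mono h n) h

theorem lcsIn_le_self_of_normal {L : Subgroup G} (hL : L.Normal) : ∀ n, lcsIn L n ≤ L
  | 0 => le_rfl
  | n + 1 => commutator_le_right _ _

theorem lcsIn_normal {L : Subgroup G} (hL : L.Normal) : ∀ n, (lcsIn L n).Normal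
  | 0 => hL
  | n + 1 => @commutator_normal _ _ _ _ (lcsIn_normal hL n) hL

theorem lcsIn_eq_bot_mono {L : Subgroup G} {a b : ℕ} (h : lcsIn L a = ⊥) (hab : a ≤ b) :
    lcsIn L b = ⊥ := by
  induction b with
  | zero => exact (Nat.le_zero.mp hab) ▸ h
  | succ n ih =>
    rcases Nat.lt_or_ge a (n+1) with h' | h'
    · have := ih (by omega)
      simp [lcsIn, this]
    · have : a = n + 1 := by omega
      exact this ▸ h

theorem map_lcsIn (L : Subgroup G) (n : ℕ) :
    ((⊤ : Subgroup ↥L).lowerCentralSeries n).map L.subtype = lcsIn L n := by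
  induction n with
  | zero => simp [lcsIn, ← MonoidHom.range_eq_map, L.range_subtype]
  | succ n ih =>
    rw [show (⊤ : Subgroup ↥L).lowerCentralSeries (n+1) = ⁅(⊤ : Subgroup ↥L).lowerCentralSeries n, (⊤ : Subgroup ↥L)⁆ from rfl,
      map_commutator, ih]
    rw [show lcsIn L (n+1) = ⁅lcsIn L n, L⁆ from rfl, ← MonoidHom.range_eq_map, L.range_subtype]

theorem isNilpotent_iff_lcsIn (L : Subgroup G) :
    Group.IsNilpotent L ↔ ∃ n, lcsIn L n = ⊥ := by
  rw [Subgroup.nilpotent_iff_lowerCentralSeries]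
  constructor
  · rintro ⟨n, hn⟩
    exact ⟨n, by rw [← map_lcsIn, hn, Subgroup.map_bot]⟩
  · rintro ⟨n, hn⟩
    refine ⟨n, ?_⟩
    rw [← map_lcsIn] at hn
    rwa [Subgroup.map_eq_bot_iff_of_injective _ L.subtype_injective] at hn

theorem isNilpotent_of_le {A B : Subgroup G} (h : A ≤ B) (hB : Group.IsNilpotent B) :
    Group.IsNilpotent A := by
  rw [isNilpotent_iff_lcsIn] at hB ⊢
  obtain ⟨n, hn⟩ := hB
  exact ⟨n, le_bot_iff.mp (hn ▸ lcsIn_mono h n)⟩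
instance subgroupFinite [Finite G] : Finite (Subgroup G) :=
  Finite.of_injective (fun H : Subgroup G => (H : Set G)) (fun _ _ h => SetLike.ext' h)

theorem normal_iSup {ι : Sort*} (A : ι → Subgroup G) (h : ∀ i, (A i).Normal) :
    (⨆ i, A i).Normal := by
  apply Subgroup.Normal.of_conjugate_fixed
  intro g
  rw [Subgroup.pointwise_smul_def]
  erw [Subgroup.map_iSup]
  congr 1
  funext i
  rw [← Subgroup.pointwise_smul_def]
  exact @Subgroup.Normal.conj_smul_eq_self _ _ g (A i) (h i)

/-- The subgroup of elements whose commutators with `C` all lie in the normal subgroup `R`. -/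
private def commK (C R : Subgroup G) (hR : R.Normal) : Subgroup G where
  carrier := {g | ∀ c ∈ C, ⁅g, c⁆ ∈ R}
  one_mem' := by intro c hc; simpa using R.one_mem
  mul_mem' := by
    intro a b ha hb c hc
    have key : ⁅a * b, c⁆ = (a * ⁅b, c⁆ * a⁻¹) * ⁅a, c⁆ := by group
    rw [key]
    exact R.mul_mem (hR.conj_mem _ (hb c hc) a) (ha c hc)
  inv_mem' := by
    intro a ha c hc
    have key : ⁅a⁻¹, c⁆ = a⁻¹ * ⁅a, c⁆⁻¹ * a := by group
    rw [key]
    exact (by simpa using hR.conj_mem _ (R.inv_mem (ha c hc)) a⁻¹)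

private theorem le_commK_iff {A C R : Subgroup G} (hR : R.Normal) :
    A ≤ commK C R hR ↔ ⁅A, C⁆ ≤ R := by
  rw [commutator_le]
  rfl

theorem commutator_iSup_le {ι : Sort*} {A : ι → Subgroup G} {C R : Subgroup G} (hR : R.Normal)
    (h : ∀ i, ⁅A i, C⁆ ≤ R) : ⁅⨆ i, A i, C⁆ ≤ R :=
  (le_commK_iff hR).mp (iSup_le fun i => (le_commK_iff hR).mpr (h i))

theorem commutator_sup_le_left {A B C R : Subgroup G} (hR : R.Normal)
    (h1 : ⁅A, C⁆ ≤ R) (h2 : ⁅B, C⁆ ≤ R) : ⁅A ⊔ B, C⁆ ≤ R :=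
  (le_commK_iff hR).mp (sup_le ((le_commK_iff hR).mpr h1) ((le_commK_iff hR).mpr h2))

theorem commutator_sup_le_right {A B C R : Subgroup G} (hR : R.Normal)
    (h1 : ⁅C, A⁆ ≤ R) (h2 : ⁅C, B⁆ ≤ R) : ⁅C, A ⊔ B⁆ ≤ R := by
  rw [commutator_comm]
  exact commutator_sup_le_left hR (commutator_comm A C ▸ h1) (commutator_comm B C ▸ h2)

def bnd (H : Subgroup G) : ℕ → Subgroup G
  | 0 => ⊤
  | i + 1 => lcsIn H i

theorem bnd_normal {H : Subgroup G} (hH : H.Normal) : ∀ i, (bnd H i).Normal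
  | 0 => by show (⊤ : Subgroup G).Normal; infer_instance
  | i + 1 => lcsIn_normal hH i

theorem bnd_step {H : Subgroup G} (hH : H.Normal) (i : ℕ) : ⁅bnd H i, H⁆ ≤ bnd H (i + 1) := by
  cases i with
  | zero =>
    haveI := hH
    exact commutator_le_right ⊤ H
  | succ j => exact le_rfl

theorem fitting2 {H K : Subgroup G} (hH : H.Normal) (hK : K.Normal) {a b : ℕ}
    (ha : lcsIn H a = ⊥) (hb : lcsIn K b = ⊥) : lcsIn (H ⊔ K) (a + b) = ⊥ := by
  set T : ℕ → Subgroup G := fun n => ⨆ i ∈ Finset.range (n + 2), (bnd H i ⊓ bnd K (n + 1 - i))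
    with hT
  have hXnormal : ∀ n i, (bnd H i ⊓ bnd K (n + 1 - i)).Normal := fun n i =>
    @Subgroup.normal_inf_normal _ _ _ _ (bnd_normal hH i) (bnd_normal hK (n + 1 - i))
  have hTnormal : ∀ n, (T n).Normal := fun n =>
    normal_iSup _ fun i => normal_iSup _ fun _ => hXnormal n i
  have key : ∀ n, lcsIn (H ⊔ K) n ≤ T n := by
    intro n
    induction n with
    | zero =>
      apply sup_le
      · refine le_trans ?_ (le_iSup₂ (f := fun i (_ : i ∈ Finset.range 2) => bnd H i ⊓ bnd K (1 - i)) 1 (by simp))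
        simp [bnd, lcsIn]
      · refine le_trans ?_ (le_iSup₂ (f := fun i (_ : i ∈ Finset.range 2) => bnd H i ⊓ bnd K (1 - i)) 0 (by simp))
        simp [bnd, lcsIn]
    | succ n ih =>
      have stepH : ⁅T n, H⁆ ≤ T (n + 1) := by
        refine commutator_iSup_le (hTnormal (n+1)) fun i => commutator_iSup_le (hTnormal (n+1)) fun hi => ?_
        have hiLt : i < n + 2 := Finset.mem_range.mp hi
        have h1 : ⁅bnd H i ⊓ bnd K (n + 1 - i), H⁆ ≤ bnd H (i+1) :=
          (commutator_mono inf_le_left le_rfl).trans (bnd_step hH i)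
        have h2 : ⁅bnd H i ⊓ bnd K (n + 1 - i), H⁆ ≤ bnd K (n + 1 - i) := by
          haveI := bnd_normal hK (n + 1 - i)
          exact (commutator_mono inf_le_right le_rfl).trans (commutator_le_left _ _)
        refine le_trans (le_inf h1 h2) ?_
        have harith : n + 1 - i = n + 2 - (i + 1) := by omega
        rw [harith]
        exact le_iSup₂ (f := fun j (_ : j ∈ Finset.range (n + 3)) => bnd H j ⊓ bnd K (n + 2 - j))
          (i+1) (Finset.mem_range.mpr (by omega))
      have stepK : ⁅T n, K⁆ ≤ T (n + 1) := by
        refine commutator_iSup_le (hTnormal (n+1)) fun i => commutator_iSup_le (hTnormal (n+1)) fun hi => ?_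
        have hiLt : i < n + 2 := Finset.mem_range.mp hi
        have h1 : ⁅bnd H i ⊓ bnd K (n + 1 - i), K⁆ ≤ bnd H i := by
          haveI := bnd_normal hH i
          exact (commutator_mono inf_le_left le_rfl).trans (commutator_le_left _ _)
        have h2 : ⁅bnd H i ⊓ bnd K (n + 1 - i), K⁆ ≤ bnd K (n + 2 - i) := by
          refine le_trans ((commutator_mono inf_le_right le_rfl).trans (bnd_step hK (n+1-i))) ?_
          have : n + 1 - i + 1 = n + 2 - i := by omega
          rw [this]
        refine le_trans (le_inf h1 h2) ?_
        exact le_iSup₂ (f := fun j (_ : j ∈ Finset.range (n + 3)) => bnd H j ⊓ bnd K (n + 2 - j))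
          i (Finset.mem_range.mpr (by omega))
      calc lcsIn (H ⊔ K) (n+1) = ⁅lcsIn (H ⊔ K) n, H ⊔ K⁆ := rfl
        _ ≤ ⁅T n, H ⊔ K⁆ := commutator_mono ih le_rfl
        _ ≤ T (n+1) := commutator_sup_le_right (hTnormal (n+1)) stepH stepK
  refine le_bot_iff.mp (le_trans (key (a+b)) ?_)
  refine iSup₂_le fun i hi => ?_
  have hiLt : i < a + b + 2 := Finset.mem_range.mp hi
  rcases Nat.lt_or_ge i (a+1) with h' | h'
  · -- i ≤ a, so a+b+1-i ≥ b+1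
    have : bnd K (a + b + 1 - i) ≤ ⊥ := by
      have h3 : a + b + 1 - i = (a + b - i) + 1 := by omega
      rw [h3]
      exact le_of_eq (lcsIn_eq_bot_mono hb (by omega))
    exact inf_le_right.trans this
  · have : bnd H i ≤ ⊥ := by
      obtain ⟨j, rfl⟩ : ∃ j, i = j + 1 := ⟨i - 1, by omega⟩
      exact le_of_eq (lcsIn_eq_bot_mono ha (by omega))
    exact inf_le_left.trans this

theorem fittingSubgroup_def (G : Type*) [Group G] :
    fittingSubgroup G = sSup {H : Subgroup G | H.Normal ∧ Group.IsNilpotent H} :=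
  sSup_eq_iSup.symm

theorem le_fittingSubgroup {G : Type*} [Group G] {H : Subgroup G} (h1 : H.Normal)
    (h2 : Group.IsNilpotent H) : H ≤ fittingSubgroup G :=
  le_iSup₂ (f := fun (H : Subgroup G) (_ : H ∈ {H : Subgroup G | H.Normal ∧ Group.IsNilpotent H}) => H) H ⟨h1, h2⟩

theorem fittingSubgroup_props (G : Type*) [Group G] [Finite G] :
    (fittingSubgroup G).Normal ∧ ∃ n, lcsIn (fittingSubgroup G) n = ⊥ := by
  classical
  have main : ∀ T : Finset (Subgroup G), (∀ H ∈ T, H.Normal ∧ Group.IsNilpotent H) →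
      (sSup (T : Set (Subgroup G))).Normal ∧ ∃ n, lcsIn (sSup (T : Set (Subgroup G))) n = ⊥ := by
    intro T
    induction T using Finset.induction_on with
    | empty =>
      intro _
      rw [Finset.coe_empty, sSup_empty]
      exact ⟨by infer_instance, ⟨0, rfl⟩⟩
    | @insert H T hHT ih =>
      intro hyp
      have hH := hyp H (Finset.mem_insert_self H T)
      have hT := ih fun K hK => hyp K (Finset.mem_insert_of_mem hK)
      rw [Finset.coe_insert, sSup_insert]
      obtain ⟨a, ha⟩ := (isNilpotent_iff_lcsIn H).mp hH.2
      obtain ⟨b, hb⟩ := hT.2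
      constructor
      · haveI := hH.1; haveI := hT.1; infer_instance
      · exact ⟨a + b, fitting2 hH.1 hT.1 ha hb⟩
  have hS : ((Set.toFinite {H : Subgroup G | H.Normal ∧ Group.IsNilpotent H}).toFinset :
      Set (Subgroup G)) = {H : Subgroup G | H.Normal ∧ Group.IsNilpotent H} :=
    Set.Finite.coe_toFinset _
  have := main (Set.toFinite {H : Subgroup G | H.Normal ∧ Group.IsNilpotent H}).toFinset
    (fun H hH => by rwa [Set.Finite.mem_toFinset] at hH)
  rw [hS, ← fittingSubgroup_def] at this
  exact this

end FStarAux

open Subgroup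


namespace FStarAux

variable {G : Type*} [Group G]

theorem normal_subgroupOf_iff {A B : Subgroup G} (hAB : A ≤ B) :
    (A.subgroupOf B).Normal ↔ ∀ a ∈ A, ∀ b ∈ B, b * a * b⁻¹ ∈ A := by
  constructor
  · intro h a ha b hb
    have := h.conj_mem ⟨a, hAB ha⟩ (by rwa [mem_subgroupOf]) ⟨b, hb⟩
    rwa [mem_subgroupOf] at this
  · intro h
    constructor
    rintro ⟨a, haB⟩ ha ⟨b, hb⟩
    rw [mem_subgroupOf] at ha ⊢
    exact h a ha b hb

theorem normal_subgroupOf_map_subtype {N : Subgroup G} {A B : Subgroup ↥N} (hAB : A ≤ B)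
    (h : (A.subgroupOf B).Normal) :
    ((A.map N.subtype).subgroupOf (B.map N.subtype)).Normal := by
  rw [normal_subgroupOf_iff (map_mono hAB)]
  rintro a ⟨x, hx, rfl⟩ b ⟨y, hy, rfl⟩
  refine ⟨y * x * y⁻¹, (normal_subgroupOf_iff hAB).mp h x hx y hy, by simp⟩

theorem normal_subgroupOf_map_equiv {G' : Type*} [Group G'] (e : G ≃* G') {A B : Subgroup G}
    (hAB : A ≤ B) (h : (A.subgroupOf B).Normal) :
    ((A.map e.toMonoidHom).subgroupOf (B.map e.toMonoidHom)).Normal := by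
  rw [normal_subgroupOf_iff (map_mono hAB)]
  rintro a ⟨x, hx, rfl⟩ b ⟨y, hy, rfl⟩
  refine ⟨y * x * y⁻¹, (normal_subgroupOf_iff hAB).mp h x hx y hy, by simp⟩

theorem normal_subgroupOf_subgroupOf {A B H : Subgroup G} (hAB : A ≤ B) (hBH : B ≤ H)
    (h : (A.subgroupOf B).Normal) :
    ((A.subgroupOf H).subgroupOf (B.subgroupOf H)).Normal := by
  rw [normal_subgroupOf_iff (show A.subgroupOf H ≤ B.subgroupOf H from fun x hx => hAB hx)]
  intro a ha b hb
  rw [mem_subgroupOf] at ha hb ⊢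
  push_cast
  exact (normal_subgroupOf_iff hAB).mp h a ha b hb

theorem normal_of_subgroupOf_top {A : Subgroup G} (h : (A.subgroupOf ⊤).Normal) : A.Normal := by
  constructor
  intro a ha b
  exact (normal_subgroupOf_iff le_top).mp h a ha b trivial

theorem chain_zero_le {n : ℕ} (s : Fin (n + 1) → Subgroup G)
    (hstep : ∀ i : Fin n, s i.castSucc ≤ s i.succ) :
    ∀ (j : ℕ) (hj : j < n + 1), s 0 ≤ s ⟨j, hj⟩ := by
  intro j
  induction j with
  | zero => intro hj; exact le_rfl
  | succ j ih =>
    intro hj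
    have h1 : s ⟨j, by omega⟩ ≤ s ⟨j + 1, hj⟩ := by
      have := hstep ⟨j, by omega⟩
      simpa [Fin.castSucc, Fin.succ] using this
    exact (ih (by omega)).trans h1

theorem map_center_equiv {H K : Type*} [Group H] [Group K] (e : H ≃* K) :
    (Subgroup.center H).map e.toMonoidHom = Subgroup.center K := by
  ext k
  constructor
  · rintro ⟨h, hh, rfl⟩
    rw [SetLike.mem_coe, Subgroup.mem_center_iff] at hh
    rw [Subgroup.mem_center_iff]
    intro g
    obtain ⟨g', rfl⟩ := e.surjective g
    show e g' * e h = e h * e g'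
    rw [← map_mul, ← map_mul, hh]
  · intro hk
    refine ⟨e.symm k, ?_, by simp⟩
    rw [Subgroup.mem_center_iff] at hk
    rw [SetLike.mem_coe, Subgroup.mem_center_iff]
    intro g
    apply e.injective
    show e (g * e.symm k) = e (e.symm k * g)
    rw [map_mul, map_mul, e.apply_symm_apply]
    exact hk (e g)

theorem isQuasisimple_of_mulEquiv {H K : Type*} [Group H] [Group K] (e : H ≃* K)
    (h : IsQuasisimple H) : IsQuasisimple K := by
  obtain ⟨h1, h2⟩ := h
  constructor
  · have : (commutator H).map e.toMonoidHom = commutator K := by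
      rw [commutator_def, commutator_def, map_commutator]
      congr 1 <;> exact Subgroup.map_top_of_surjective _ e.surjective
    rw [← this, h1, Subgroup.map_top_of_surjective _ e.surjective]
  · haveI := h2
    have e' : H ⧸ Subgroup.center H ≃* K ⧸ Subgroup.center K :=
      QuotientGroup.congr _ _ e (map_center_equiv e)
    haveI : Nontrivial (K ⧸ Subgroup.center K) := e'.symm.toEquiv.nontrivial
    exact IsSimpleGroup.isSimpleGroup_of_surjective e'.toMonoidHom e'.surjective

end FStarAux

namespace FStarAux

universe u
variable {G : Type u} [Group G]

theorem commElt_central_left {z k x : G} (hz : z ∈ Subgroup.center G) :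
    ⁅k * z, x⁆ = ⁅k, x⁆ := by
  have hzx : z * x = x * z := (Subgroup.mem_center_iff.mp hz x).symm
  rw [commutatorElement_def, commutatorElement_def, mul_inv_rev]
  calc k * z * x * (z⁻¹ * k⁻¹) * x⁻¹ = k * (z * x * z⁻¹) * k⁻¹ * x⁻¹ := by group
    _ = k * x * k⁻¹ * x⁻¹ := by rw [hzx, mul_inv_cancel_right]

theorem commElt_central_right {z k x : G} (hz : z ∈ Subgroup.center G) :
    ⁅x, k * z⁆ = ⁅x, k⁆ := by
  have hzx : ∀ y : G, z * y = y * z := fun y => (Subgroup.mem_center_iff.mp hz y).symm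
  rw [commutatorElement_def, commutatorElement_def, mul_inv_rev]
  calc x * (k * z) * x⁻¹ * (z⁻¹ * k⁻¹) = x * k * (z * x⁻¹ * z⁻¹) * k⁻¹ := by group
    _ = x * k * x⁻¹ * k⁻¹ := by rw [hzx x⁻¹, mul_inv_cancel_right]

/-- A proper normal subgroup of a quasisimple group is central. -/
theorem quasisimple_proper_normal_central {H : Type*} [Group H] (hq : IsQuasisimple H)
    {K : Subgroup H} (hK : K.Normal) (hne : K ≠ ⊤) : K ≤ Subgroup.center H := by
  obtain ⟨h1, h2⟩ := hq
  haveI := h2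
  rcases (hK.map (QuotientGroup.mk' (Subgroup.center H))
      (QuotientGroup.mk'_surjective _)).eq_bot_or_eq_top with hb | ht
  · intro k hk
    have : QuotientGroup.mk' (Subgroup.center H) k ∈
        K.map (QuotientGroup.mk' (Subgroup.center H)) := Subgroup.mem_map_of_mem _ hk
    rw [hb, Subgroup.mem_bot] at this
    exact (QuotientGroup.eq_one_iff k).mp this
  · exfalso
    apply hne
    rw [eq_top_iff, ← h1, commutator_def]
    rw [Subgroup.commutator_le]
    intro g _ h' _
    have hg : ∃ k ∈ K, ∃ z ∈ Subgroup.center H, g = k * z := by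
      have : QuotientGroup.mk' (Subgroup.center H) g ∈
          K.map (QuotientGroup.mk' (Subgroup.center H)) := by rw [ht]; trivial
      obtain ⟨k, hk, hkg⟩ := this
      refine ⟨k, hk, k⁻¹ * g, ?_, by group⟩
      have : QuotientGroup.mk' (Subgroup.center H) (k⁻¹ * g) = 1 := by
        rw [map_mul, map_inv, hkg]; group
      exact (QuotientGroup.eq_one_iff _).mp this
    have hh : ∃ k ∈ K, ∃ z ∈ Subgroup.center H, h' = k * z := by
      have : QuotientGroup.mk' (Subgroup.center H) h' ∈
          K.map (QuotientGroup.mk' (Subgroup.center H)) := by rw [ht]; trivial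
      obtain ⟨k, hk, hkg⟩ := this
      refine ⟨k, hk, k⁻¹ * h', ?_, by group⟩
      have : QuotientGroup.mk' (Subgroup.center H) (k⁻¹ * h') = 1 := by
        rw [map_mul, map_inv, hkg]; group
      exact (QuotientGroup.eq_one_iff _).mp this
    obtain ⟨k, hk, z, hz, rfl⟩ := hg
    obtain ⟨k', hk', z', hz', rfl⟩ := hh
    rw [commElt_central_left hz, commElt_central_right hz', commutatorElement_def]
    exact K.mul_mem (K.mul_mem (K.mul_mem hk hk') (K.inv_mem hk)) (K.inv_mem hk')

theorem commutator_self_eq (C : Subgroup G) (h : commutator ↥C = ⊤) : ⁅C, C⁆ = C := by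
  have h2 : (⁅(⊤ : Subgroup ↥C), (⊤ : Subgroup ↥C)⁆).map C.subtype = ⁅C, C⁆ := by
    rw [Subgroup.map_commutator, ← MonoidHom.range_eq_map, C.range_subtype]
  rw [← h2, ← _root_.commutator_def, h, ← MonoidHom.range_eq_map, C.range_subtype]

theorem perfect_commutator_eq_bot {C N : Subgroup G} (hperf : ⁅C, C⁆ = C)
    (h : ⁅C, N⁆ ≤ Subgroup.centralizer (C : Set G)) : ⁅C, N⁆ = ⊥ := by
  have h1 : ⁅⁅C, N⁆, C⁆ = ⊥ := Subgroup.commutator_eq_bot_iff_le_centralizer.mpr h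
  have h2 : ⁅⁅N, C⁆, C⁆ = ⊥ := by rw [Subgroup.commutator_comm N C]; exact h1
  have h3 := Subgroup.commutator_commutator_eq_bot_of_rotate h1 h2
  rwa [hperf] at h3

theorem chain_le {n : ℕ} (s : Fin (n + 1) → Subgroup G)
    (hstep : ∀ i : Fin n, s i.castSucc ≤ s i.succ) :
    ∀ (j : ℕ) (hj : j < n + 1) (i : ℕ) (hi : i ≤ j), s ⟨i, by omega⟩ ≤ s ⟨j, hj⟩ := by
  intro j
  induction j with
  | zero =>
    intro hj i hi
    obtain rfl : i = 0 := by omega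
    exact le_rfl
  | succ j ih =>
    intro hj i hi
    have hs : s ⟨j, by omega⟩ ≤ s ⟨j + 1, hj⟩ := by
      have := hstep ⟨j, by omega⟩
      simpa [Fin.castSucc, Fin.succ] using this
    rcases Nat.eq_or_lt_of_le hi with h' | h'
    · subst h'; exact le_rfl
    · exact (ih (by omega) i (by omega)).trans hs

/-- Key component lemma: a quasisimple subnormal subgroup not contained in a normal
subgroup `N` centralizes `N`. -/
theorem comp_step : ∀ (n : ℕ) {G : Type u} [Group G] (C N : Subgroup G)
    (s : Fin (n + 1) → Subgroup G), s 0 = C → s (Fin.last n) = ⊤ →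
    (∀ i : Fin n, s i.castSucc ≤ s i.succ ∧ ((s i.castSucc).subgroupOf (s i.succ)).Normal) →
    N.Normal → IsQuasisimple ↥C → ¬C ≤ N → ⁅C, N⁆ = ⊥ := by
  intro n
  induction n with
  | zero =>
    intro G _ C N s h0 hlast hstep hN hq hCN
    have hCtop : C = ⊤ := by rw [← h0, show (0 : Fin 1) = Fin.last 0 from rfl, hlast]
    subst hCtop
    have hqG : IsQuasisimple G := isQuasisimple_of_mulEquiv Subgroup.topEquiv hq
    have hNne : N ≠ ⊤ := fun h => hCN (h ▸ le_rfl)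
    have hcen : N ≤ Subgroup.center G := quasisimple_proper_normal_central hqG hN hNne
    rw [Subgroup.commutator_comm]
    apply Subgroup.commutator_eq_bot_iff_le_centralizer.mpr
    intro m hm
    exact Subgroup.mem_centralizer_iff.mpr fun c _ =>
      Subgroup.mem_center_iff.mp (hcen hm) c
  | succ n ih =>
    intro G _ C N s h0 hlast hstep hN hq hCN
    set H : Subgroup G := s ⟨n, by omega⟩ with hH
    have hHnorm : H.Normal := by
      have h2 := (hstep (Fin.last n)).2
      have hcs : (Fin.last n).castSucc = (⟨n, by omega⟩ : Fin (n + 2)) := rfl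
      have hsc : (Fin.last n).succ = Fin.last (n + 1) := Fin.succ_last n
      rw [hcs, hsc, hlast] at h2
      exact normal_of_subgroupOf_top h2
    have hCH : C ≤ H := by
      rw [← h0, show (0 : Fin (n+2)) = (⟨0, by omega⟩ : Fin (n+2)) from rfl]
      exact chain_le s (fun i => (hstep i).1) n (by omega) 0 (by omega)
    -- chain inside H
    set t : Fin (n + 1) → Subgroup ↥H := fun i => (s i.castSucc).subgroupOf H with ht
    have ht0 : t 0 = C.subgroupOf H := by
      simp only [ht, Fin.castSucc_zero, h0]
    have htlast : t (Fin.last n) = ⊤ := by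
      simp only [ht]
      have : (Fin.last n).castSucc = (⟨n, by omega⟩ : Fin (n + 2)) := rfl
      rw [this, ← hH, Subgroup.subgroupOf_self]
    have htstep : ∀ i : Fin n, t i.castSucc ≤ t i.succ ∧
        ((t i.castSucc).subgroupOf (t i.succ)).Normal := by
      intro i
      have horig := hstep i.castSucc
      rw [Fin.succ_castSucc] at horig
      have hle : s i.castSucc.castSucc ≤ s i.succ.castSucc := horig.1
      have hBH : s i.succ.castSucc ≤ H := by
        have : s i.succ.castSucc = s ⟨(i : ℕ) + 1, by omega⟩ := rfl
        rw [this, hH]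
        exact chain_le s (fun j => (hstep j).1) n (by omega) ((i : ℕ) + 1) (by omega)
      exact ⟨fun x hx => hle hx, normal_subgroupOf_subgroupOf hle hBH horig.2⟩
    have hNH : ((N ⊓ H).subgroupOf H).Normal := by
      haveI := hN; haveI := hHnorm
      exact Subgroup.Normal.comap (Subgroup.normal_inf_normal N H) H.subtype
    have hq' : IsQuasisimple ↥(C.subgroupOf H) :=
      isQuasisimple_of_mulEquiv (Subgroup.subgroupOfEquivOfLe hCH).symm hq
    have hCN' : ¬ C.subgroupOf H ≤ (N ⊓ H).subgroupOf H := by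
      intro hle
      apply hCN
      intro c hc
      have := hle (show (⟨c, hCH hc⟩ : ↥H) ∈ C.subgroupOf H from Subgroup.mem_subgroupOf.mpr hc)
      rw [Subgroup.mem_subgroupOf] at this
      exact this.1
    have hbot' := ih (C.subgroupOf H) ((N ⊓ H).subgroupOf H) t ht0 htlast htstep hNH hq' hCN'
    -- push down to G
    have hbot : ⁅C, N ⊓ H⁆ = ⊥ := by
      have := congrArg (Subgroup.map H.subtype) hbot'
      rw [Subgroup.map_commutator, Subgroup.subgroupOf_map_subtype, Subgroup.subgroupOf_map_subtype,
        Subgroup.map_bot, inf_eq_left.mpr hCH, inf_eq_left.mpr inf_le_right] at this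
      exact this
    have hsub : ⁅C, N⁆ ≤ N ⊓ H := by
      haveI := hN; haveI := hHnorm
      exact le_inf (Subgroup.commutator_le_right C N)
        ((Subgroup.commutator_mono hCH le_rfl).trans (Subgroup.commutator_le_left H N))
    have hCsub : C ≤ Subgroup.centralizer ((N ⊓ H : Subgroup G) : Set G) :=
      Subgroup.commutator_eq_bot_iff_le_centralizer.mp hbot
    have hcent2 : (N ⊓ H : Subgroup G) ≤ Subgroup.centralizer (C : Set G) := by
      intro m hm
      exact Subgroup.mem_centralizer_iff.mpr fun c hc =>
        ((Subgroup.mem_centralizer_iff.mp (hCsub hc)) m hm).symm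
    exact perfect_commutator_eq_bot (commutator_self_eq C hq.1) (hsub.trans hcent2)

theorem component_centralize {C N : Subgroup G} (hC : IsSubnormalSubgroup C)
    (hq : IsQuasisimple ↥C) (hN : N.Normal) (h : ¬C ≤ N) : ⁅C, N⁆ = ⊥ := by
  obtain ⟨n, s, h0, hlast, hstep⟩ := hC
  exact comp_step n C N s h0 hlast hstep hN hq h

end FStarAux

namespace FStarAux

universe u2
variable {G : Type u2} [Group G]

theorem map_biSup {H K : Type*} [Group H] [Group K] (S : Set (Subgroup H)) (f : H →* K) :
    (⨆ C ∈ S, C).map f = ⨆ C ∈ S, C.map f := by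
  rw [Subgroup.map_iSup]
  exact iSup_congr fun C => Subgroup.map_iSup f _

theorem isSubnormal_map_subtype {N : Subgroup G} (hN : N.Normal) {C : Subgroup ↥N}
    (h : IsSubnormalSubgroup C) : IsSubnormalSubgroup (C.map N.subtype) := by
  obtain ⟨n, s, h0, hlast, hstep⟩ := h
  refine ⟨n + 1, Fin.snoc (fun i => (s i).map N.subtype) ⊤, ?_, ?_, ?_⟩
  · rw [show (0 : Fin (n + 2)) = Fin.castSucc 0 from rfl, Fin.snoc_castSucc, h0]
  · rw [Fin.snoc_last]
  · intro i
    refine Fin.lastCases ?_ ?_ i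
    · refine ⟨?_, ?_⟩
      · rw [Fin.succ_last, Fin.snoc_last]; exact le_top
      · rw [Fin.succ_last, Fin.snoc_last, show (Fin.last n).castSucc = Fin.castSucc (Fin.last n)
          from rfl, Fin.snoc_castSucc, hlast, ← MonoidHom.range_eq_map, N.range_subtype]
        exact hN.comap _
    · intro j
      refine ⟨?_, ?_⟩
      · rw [show (j.castSucc).castSucc = Fin.castSucc j.castSucc from rfl, Fin.snoc_castSucc,
          Fin.succ_castSucc, Fin.snoc_castSucc]
        exact Subgroup.map_mono (hstep j).1
      · rw [show (j.castSucc).castSucc = Fin.castSucc j.castSucc from rfl, Fin.snoc_castSucc,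
          Fin.succ_castSucc, Fin.snoc_castSucc]
        exact normal_subgroupOf_map_subtype (hstep j).1 (hstep j).2

theorem isSubnormal_subgroupOf {N C : Subgroup G} (hCN : C ≤ N)
    (h : IsSubnormalSubgroup C) : IsSubnormalSubgroup (C.subgroupOf N) := by
  obtain ⟨n, s, h0, hlast, hstep⟩ := h
  refine ⟨n, fun i => ((s i) ⊓ N).subgroupOf N, ?_, ?_, ?_⟩
  · show (s 0 ⊓ N).subgroupOf N = C.subgroupOf N
    rw [h0, inf_eq_left.mpr hCN]
  · show (s (Fin.last n) ⊓ N).subgroupOf N = ⊤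
    rw [hlast, top_inf_eq, Subgroup.subgroupOf_self]
  · intro i
    have hle : s i.castSucc ⊓ N ≤ s i.succ ⊓ N := inf_le_inf_right N (hstep i).1
    have hle' : (s i.castSucc ⊓ N).subgroupOf N ≤ (s i.succ ⊓ N).subgroupOf N :=
      fun x hx => hle hx
    refine ⟨hle', ?_⟩
    rw [normal_subgroupOf_iff hle']
    intro a ha b hb
    rw [Subgroup.mem_subgroupOf] at ha hb ⊢
    push_cast
    refine ⟨(normal_subgroupOf_iff (hstep i).1).mp (hstep i).2 _ ha.1 _ hb.1, ?_⟩
    exact N.mul_mem (N.mul_mem b.2 (ha.2 : (a : G) ∈ N)) (N.inv_mem b.2)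

theorem isSubnormal_map_equiv {G' : Type*} [Group G'] (e : G ≃* G') {C : Subgroup G}
    (h : IsSubnormalSubgroup C) : IsSubnormalSubgroup (C.map e.toMonoidHom) := by
  obtain ⟨n, s, h0, hlast, hstep⟩ := h
  exact ⟨n, fun i => (s i).map e.toMonoidHom,
    by show (s 0).map e.toMonoidHom = _; rw [h0],
    by show (s (Fin.last n)).map e.toMonoidHom = ⊤
       rw [hlast, Subgroup.map_top_of_surjective _ e.surjective],
    fun i => ⟨Subgroup.map_mono (hstep i).1, normal_subgroupOf_map_equiv e (hstep i).1 (hstep i).2⟩⟩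

theorem normal_biSup_of_conj_stable (S : Set (Subgroup G))
    (hS : ∀ (g : G), ∀ C ∈ S, C.map (MulAut.conj g).toMonoidHom ∈ S) :
    (⨆ C ∈ S, C).Normal := by
  constructor
  intro x hx g
  have h1 : (⨆ C ∈ S, C).map (MulAut.conj g).toMonoidHom ≤ ⨆ C ∈ S, C := by
    rw [map_biSup]
    exact iSup₂_le fun C hC =>
      le_iSup₂ (f := fun (C : Subgroup G) (_ : C ∈ S) => C) _ (hS g C hC)
  exact h1 ⟨x, hx, rfl⟩

theorem conj_component {C N : Subgroup G} (hN : N.Normal) (g : G)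
    (hsub : IsSubnormalSubgroup C) (hq : IsQuasisimple ↥C) :
    IsSubnormalSubgroup (C.map (MulAut.conj g).toMonoidHom) ∧
      IsQuasisimple ↥(C.map (MulAut.conj g).toMonoidHom) ∧
      ((C.map (MulAut.conj g).toMonoidHom ≤ N) ↔ C ≤ N) := by
  refine ⟨isSubnormal_map_equiv _ hsub,
    isQuasisimple_of_mulEquiv (Subgroup.equivMapOfInjective C _ (MulAut.conj g).injective) hq, ?_, ?_⟩
  · intro h c hc
    have : g * c * g⁻¹ ∈ N := h ⟨c, hc, rfl⟩
    have h2 := hN.conj_mem _ this g⁻¹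
    simpa [mul_assoc] using h2
  · rintro h x ⟨c, hc, rfl⟩
    exact hN.conj_mem c (h hc) g

/-- The key commutator computation: commutators of `A ≤ N` with elements of
`centralizer N ⊔ F` land in `⁅A, F⁆`. -/
theorem key_comm {N Fg A M : Subgroup G} (hFg : Fg.Normal) (hNn : N.Normal) (hA : A ≤ N)
    (hM2 : M ≤ Subgroup.centralizer (N : Set G) ⊔ Fg) :
    ⁅A, M⁆ ≤ ⁅A, Fg⁆ := by
  rw [Subgroup.commutator_le]
  intro a ha m hm
  haveI := hFg
  have hm2 : (m : G) ∈ (↑(Subgroup.centralizer (N : Set G) ⊔ Fg) : Set G) := hM2 hm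
  rw [Subgroup.mul_normal] at hm2
  obtain ⟨z, hz, f, hf, rfl⟩ := hm2
  have hza : a * z = z * a := Subgroup.mem_centralizer_iff.mp hz a (hA ha)
  have hwN : ⁅a, f⁆ ∈ N := by
    have h2 : f * a⁻¹ * f⁻¹ ∈ N := by simpa [mul_assoc] using hNn.conj_mem a⁻¹ (N.inv_mem (hA ha)) f
    have : a * (f * a⁻¹ * f⁻¹) ∈ N := N.mul_mem (hA ha) h2
    simpa [commutatorElement_def, mul_assoc] using this
  have hzw : ⁅a, f⁆ * z = z * ⁅a, f⁆ := Subgroup.mem_centralizer_iff.mp hz _ hwN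
  have hkey : ⁅a, z * f⁆ = ⁅a, f⁆ := by
    have h1 : ⁅a, z * f⁆ = a * z * f * a⁻¹ * f⁻¹ * z⁻¹ := by
      rw [commutatorElement_def]; group
    rw [h1, hza]
    have h2 : z * a * f * a⁻¹ * f⁻¹ * z⁻¹ = z * ⁅a, f⁆ * z⁻¹ := by
      rw [commutatorElement_def]; group
    rw [h2, ← hzw, mul_inv_cancel_right]
  rw [hkey]
  exact Subgroup.commutator_mem_commutator ha hf

theorem M_nilpotent {N Fg : Subgroup G} (hN : N.Normal) (hFg : Fg.Normal) {c : ℕ}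
    (hFc : lcsIn Fg c = ⊥) {M : Subgroup G} (hM : M ≤ N)
    (hM2 : M ≤ Subgroup.centralizer (N : Set G) ⊔ Fg) : lcsIn M (c + 1) = ⊥ := by
  haveI := hFg
  have key : ∀ k, lcsIn M (k + 1) ≤ lcsIn Fg k := by
    intro k
    induction k with
    | zero => exact (key_comm hFg hN hM hM2).trans (Subgroup.commutator_le_right M Fg)
    | succ k ih =>
      have hA : lcsIn M (k + 1) ≤ N :=
        (lcsIn_mono hM (k + 1)).trans (lcsIn_le_self_of_normal hN (k + 1))
      exact (key_comm hFg hN hA hM2).trans (Subgroup.commutator_mono ih le_rfl)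
  exact le_bot_iff.mp (hFc ▸ key c)

theorem lcsIn_map {H K : Type*} [Group H] [Group K] (f : H →* K) (A : Subgroup H) :
    ∀ k, (lcsIn A k).map f = lcsIn (A.map f) k
  | 0 => rfl
  | k + 1 => by
    show (⁅lcsIn A k, A⁆.map f) = ⁅lcsIn (A.map f) k, A.map f⁆
    rw [Subgroup.map_commutator, lcsIn_map f A k]

theorem map_fittingSubgroup_normal {N : Subgroup G} (hN : N.Normal) :
    ((fittingSubgroup ↥N).map N.subtype).Normal := by
  constructor
  rintro x ⟨y, hy, rfl⟩ g
  haveI := hN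
  set e : ↥N ≃* ↥N := MulAut.conjNormal g with he
  refine ⟨e y, ?_, ?_⟩
  · have hmap : (fittingSubgroup ↥N).map e.toMonoidHom ≤ fittingSubgroup ↥N := by
      rw [fittingSubgroup, map_biSup]
      refine iSup₂_le fun H hH => le_fittingSubgroup (hH.1.map _ e.surjective) ?_
      haveI := hH.2
      exact nilpotent_of_mulEquiv (Subgroup.equivMapOfInjective H e.toMonoidHom e.injective)
    exact hmap ⟨y, hy, rfl⟩
  · show ((e y : ↥N) : G) = g * (N.subtype y) * g⁻¹
    rw [he, MulAut.conjNormal_apply]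
    rfl

end FStarAux

open FStarAux

theorem stmt12 {G : Type*} [Group G] [Finite G] (N : Subgroup G) [N.Normal] :
    (genFitting N).map N.subtype = N ⊓ genFitting G := by
  classical
  have hN : N.Normal := ‹N.Normal›
  obtain ⟨hFGnorm, cG, hFGc⟩ :=
    (fittingSubgroup_props G : (fittingSubgroup G).Normal ∧ ∃ n, lcsIn (fittingSubgroup G) n = ⊥)
  obtain ⟨hFNnorm, cN, hFNc⟩ := fittingSubgroup_props ↥N
  haveI := hFGnorm
  -- forward inclusions
  have hEN_le_EG : (layer ↥N).map N.subtype ≤ layer G := by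
    rw [layer, map_biSup]
    refine iSup₂_le fun C hC => ?_
    refine le_iSup₂ (f := fun (C : Subgroup G)
      (_ : C ∈ {C : Subgroup G | IsSubnormalSubgroup C ∧ IsQuasisimple ↥C}) => C) _
      ⟨isSubnormal_map_subtype hN hC.1,
        isQuasisimple_of_mulEquiv (Subgroup.equivMapOfInjective C N.subtype N.subtype_injective) hC.2⟩
  have hFN_le_FG : (fittingSubgroup ↥N).map N.subtype ≤ fittingSubgroup G := by
    refine le_fittingSubgroup (map_fittingSubgroup_normal hN) ?_
    haveI : Group.IsNilpotent ↥(fittingSubgroup ↥N) := (isNilpotent_iff_lcsIn _).mpr ⟨cN, hFNc⟩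
    exact nilpotent_of_mulEquiv
      (Subgroup.equivMapOfInjective _ N.subtype N.subtype_injective)
  have forward : (genFitting ↥N).map N.subtype ≤ N ⊓ genFitting G := by
    rw [genFitting, genFitting, Subgroup.map_sup]
    refine le_inf (sup_le (Subgroup.map_subtype_le _) (Subgroup.map_subtype_le _))
      (sup_le (hEN_le_EG.trans le_sup_left) (hFN_le_FG.trans le_sup_right))
  refine le_antisymm forward ?_
  -- reverse inclusion
  set comps : Set (Subgroup G) :=
    {C : Subgroup G | IsSubnormalSubgroup C ∧ IsQuasisimple ↥C} with hcomps
  set S1 : Set (Subgroup G) := {C | C ∈ comps ∧ C ≤ N} with hS1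
  set S2 : Set (Subgroup G) := {C | C ∈ comps ∧ ¬ C ≤ N} with hS2
  set E1 : Subgroup G := ⨆ C ∈ S1, C with hE1
  set E2 : Subgroup G := ⨆ C ∈ S2, C with hE2
  have hsplit : layer G = E1 ⊔ E2 := by
    rw [layer]
    refine le_antisymm (iSup₂_le fun C hC => ?_) (sup_le ?_ ?_)
    · by_cases h : C ≤ N
      · exact le_sup_of_le_left
          (le_iSup₂ (f := fun (C : Subgroup G) (_ : C ∈ S1) => C) C ⟨hC, h⟩)
      · exact le_sup_of_le_right
          (le_iSup₂ (f := fun (C : Subgroup G) (_ : C ∈ S2) => C) C ⟨hC, h⟩)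
    · exact iSup₂_le fun C hC =>
        le_iSup₂ (f := fun (C : Subgroup G) (_ : C ∈ comps) => C) C hC.1
    · exact iSup₂_le fun C hC =>
        le_iSup₂ (f := fun (C : Subgroup G) (_ : C ∈ comps) => C) C hC.1
  have hE1N : E1 ≤ N := iSup₂_le fun C hC => hC.2
  have hE2cent : E2 ≤ Subgroup.centralizer (N : Set G) := by
    refine iSup₂_le fun C hC => ?_
    exact Subgroup.commutator_eq_bot_iff_le_centralizer.mp
      (component_centralize hC.1.1 hC.1.2 hN hC.2)
  have hE1norm : E1.Normal := by
    refine normal_biSup_of_conj_stable S1 fun g C hC => ?_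
    obtain ⟨h1, h2, h3⟩ := conj_component hN g hC.1.1 hC.1.2
    exact ⟨⟨h1, h2⟩, h3.mpr hC.2⟩
  have hE2norm : E2.Normal := by
    refine normal_biSup_of_conj_stable S2 fun g C hC => ?_
    obtain ⟨h1, h2, h3⟩ := conj_component hN g hC.1.1 hC.1.2
    exact ⟨⟨h1, h2⟩, fun hle => hC.2 (h3.mp hle)⟩
  haveI := hE2norm
  set W : Subgroup G := E2 ⊔ fittingSubgroup G with hW
  have hWnorm : W.Normal := Subgroup.sup_normal E2 (fittingSubgroup G)
  haveI := hWnorm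
  have hE1_le_mapEN : E1 ≤ (layer ↥N).map N.subtype := by
    refine iSup₂_le fun C hC => ?_
    have hsub : IsSubnormalSubgroup (C.subgroupOf N) := isSubnormal_subgroupOf hC.2 hC.1.1
    have hq : IsQuasisimple ↥(C.subgroupOf N) :=
      isQuasisimple_of_mulEquiv (Subgroup.subgroupOfEquivOfLe hC.2).symm hC.1.2
    have hle : C.subgroupOf N ≤ layer ↥N := by
      rw [layer]
      exact le_iSup₂ (f := fun (D : Subgroup ↥N)
        (_ : D ∈ {D : Subgroup ↥N | IsSubnormalSubgroup D ∧ IsQuasisimple ↥D}) => D) _ ⟨hsub, hq⟩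
    calc C = (C.subgroupOf N).map N.subtype := by
            rw [Subgroup.subgroupOf_map_subtype, inf_eq_left.mpr hC.2]
      _ ≤ (layer ↥N).map N.subtype := Subgroup.map_mono hle
  -- now take x in the RHS
  intro x hx
  obtain ⟨hxN, hxEF⟩ := hx
  rw [genFitting, hsplit, sup_assoc] at hxEF
  have hxEW : x ∈ (↑(E1 ⊔ W) : Set G) := hxEF
  rw [Subgroup.mul_normal] at hxEW
  obtain ⟨a, ha, w, hw, hx_eq⟩ := hxEW
  have hwN : w ∈ N := by
    have : w = a⁻¹ * x := by rw [← hx_eq]; group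
    rw [this]
    exact N.mul_mem (N.inv_mem (hE1N ha)) hxN
  set M : Subgroup G := N ⊓ W with hM
  have hMnorm : M.Normal := Subgroup.normal_inf_normal N W
  have hMnil : lcsIn M (cG + 1) = ⊥ := by
    refine M_nilpotent hN hFGnorm hFGc inf_le_left ?_
    exact inf_le_right.trans (sup_le (hE2cent.trans le_sup_left) le_sup_right)
  have hM_le_mapFN : M ≤ (fittingSubgroup ↥N).map N.subtype := by
    have hMN : M ≤ N := inf_le_left
    have hnil' : lcsIn (M.subgroupOf N) (cG + 1) = ⊥ := by
      have hmap : (lcsIn (M.subgroupOf N) (cG + 1)).map N.subtype = ⊥ := by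
        rw [lcsIn_map, Subgroup.subgroupOf_map_subtype, inf_eq_left.mpr hMN, hMnil]
      rwa [Subgroup.map_eq_bot_iff_of_injective _ N.subtype_injective] at hmap
    have h1 : M.subgroupOf N ≤ fittingSubgroup ↥N :=
      le_fittingSubgroup (hMnorm.comap N.subtype)
        ((isNilpotent_iff_lcsIn _).mpr ⟨cG + 1, hnil'⟩)
    calc M = (M.subgroupOf N).map N.subtype := by
            rw [Subgroup.subgroupOf_map_subtype, inf_eq_left.mpr hMN]
      _ ≤ (fittingSubgroup ↥N).map N.subtype := Subgroup.map_mono h1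
  rw [genFitting, Subgroup.map_sup]
  rw [← hx_eq]
  exact Subgroup.mul_mem _ (Subgroup.mem_sup_left (hE1_le_mapEN ha))
    (Subgroup.mem_sup_right (hM_le_mapFN ⟨hwN, hw⟩))
end

section
/- Let A be a finite minimal non-nilpotent group with normal Sylow p-subgroup A_p of exponent p, where p is the smallest prime divisor of |A|, and suppose A_p is not cyclic. Then there exists a subgroup ⟨x⟩ of A_p of order p that is not S-permutable in A. -/
open scoped Pointwise

/-- If two subgroups permute, the coercion of their join is the set product. -/
lemma coe_sup_of_mul_comm' {G : Type*} [Group G] {H K : Subgroup G}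
    (h : (H : Set G) * (K : Set G) = (K : Set G) * (H : Set G)) :
    ((H ⊔ K : Subgroup G) : Set G) = (H : Set G) * (K : Set G) := by
  let S : Subgroup G :=
    { carrier := (H : Set G) * (K : Set G)
      one_mem' := ⟨1, H.one_mem, 1, K.one_mem, one_mul 1⟩
      mul_mem' := by
        rintro a b ⟨h1, hh1, k1, hk1, rfl⟩ ⟨h2, hh2, k2, hk2, rfl⟩
        have hmem : k1 * h2 ∈ (H : Set G) * (K : Set G) := by
          rw [h]
          exact ⟨k1, hk1, h2, hh2, rfl⟩
        obtain ⟨h', hh', k', hk', heq⟩ := hmem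
        refine ⟨h1 * h', mul_mem hh1 hh', k' * k2, mul_mem hk' hk2, ?_⟩
        show h1 * h' * (k' * k2) = h1 * k1 * (h2 * k2)
        have heq' : h' * k' = k1 * h2 := heq
        rw [show h1 * h' * (k' * k2) = h1 * (h' * k') * k2 by group, heq']
        group
      inv_mem' := by
        rintro a ⟨h1, hh1, k1, hk1, rfl⟩
        have hmem : k1⁻¹ * h1⁻¹ ∈ (H : Set G) * (K : Set G) := by
          rw [h]
          exact ⟨k1⁻¹, inv_mem hk1, h1⁻¹, inv_mem hh1, rfl⟩
        rwa [mul_inv_rev] }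
  have hS : H ⊔ K = S := by
    apply le_antisymm
    · refine sup_le (fun x hx => ?_) (fun x hx => ?_)
      · exact ⟨x, hx, 1, K.one_mem, mul_one x⟩
      · exact ⟨1, H.one_mem, x, hx, one_mul x⟩
    · rintro x ⟨h1, hh1, k1, hk1, rfl⟩
      exact mul_mem (Subgroup.mem_sup_left hh1) (Subgroup.mem_sup_right hk1)
  rw [hS]
  rfl

open scoped commutatorElement

/-- In a finite nilpotent group, elements of coprime prime power orders commute. -/
lemma commute_of_nilpotent_coprime' {G : Type*} [Group G] [Finite G]
    (hnil : Group.IsNilpotent G) {p q : ℕ} (hp : p.Prime) (hq : q.Prime) (hpq : p ≠ q)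
    {x y : G} (hx : ∃ m, x ^ p ^ m = 1) (hy : ∃ m, y ^ q ^ m = 1) : Commute x y := by
  haveI := Fact.mk hp
  haveI := Fact.mk hq
  obtain ⟨m, hm⟩ := hx
  obtain ⟨n, hn⟩ := hy
  have hxp : IsPGroup p (Subgroup.zpowers x) := by
    intro g
    obtain ⟨k, hk⟩ := Subgroup.mem_zpowers_iff.mp g.2
    refine ⟨m, Subtype.ext ?_⟩
    have : (x ^ k) ^ (p ^ m : ℕ) = (x ^ (p ^ m : ℕ)) ^ k := by
      rw [← zpow_natCast (x ^ k), ← zpow_mul, mul_comm, zpow_mul, zpow_natCast]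
    push_cast
    rw [← hk, this, hm, one_zpow]
  have hyq : IsPGroup q (Subgroup.zpowers y) := by
    intro g
    obtain ⟨k, hk⟩ := Subgroup.mem_zpowers_iff.mp g.2
    refine ⟨n, Subtype.ext ?_⟩
    have : (y ^ k) ^ (q ^ n : ℕ) = (y ^ (q ^ n : ℕ)) ^ k := by
      rw [← zpow_natCast (y ^ k), ← zpow_mul, mul_comm, zpow_mul, zpow_natCast]
    push_cast
    rw [← hk, this, hn, one_zpow]
  obtain ⟨P1, hP1⟩ := hxp.exists_le_sylow
  obtain ⟨P2, hP2⟩ := hyq.exists_le_sylow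
  have hnorm := ((isNilpotent_of_finite_tfae (G := G)).out 0 3).mp hnil
  have h1 : (P1 : Subgroup G).Normal := hnorm p ⟨hp⟩ P1
  have h2 : (P2 : Subgroup G).Normal := hnorm q ⟨hq⟩ P2
  have hx1 : x ∈ P1 := hP1 (Subgroup.mem_zpowers x)
  have hy2 : y ∈ P2 := hP2 (Subgroup.mem_zpowers y)
  have hdisj : Disjoint (P1 : Subgroup G) (P2 : Subgroup G) :=
    IsPGroup.disjoint_of_ne p q hpq _ _ P1.2 P2.2
  have hc1 : x * y * x⁻¹ * y⁻¹ ∈ (P1 : Subgroup G) := by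
    rw [show x * y * x⁻¹ * y⁻¹ = x * (y * x⁻¹ * y⁻¹) by group]
    exact mul_mem hx1 (h1.conj_mem x⁻¹ (inv_mem hx1) y)
  have hc2 : x * y * x⁻¹ * y⁻¹ ∈ (P2 : Subgroup G) :=
    mul_mem (h2.conj_mem y hy2 x) (inv_mem hy2)
  have hone : x * y * x⁻¹ * y⁻¹ = 1 := Subgroup.disjoint_def.mp hdisj hc1 hc2
  have : ⁅x, y⁆ = 1 := by rw [commutatorElement_def]; exact hone
  exact commutatorElement_eq_one_iff_commute.mp this

theorem stmt18 {A : Type*} [Group A] [Finite A] (p : ℕ) (hp : p.Prime)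
    (hdvd : p ∣ Nat.card A) (hmin : ∀ q : ℕ, q.Prime → q ∣ Nat.card A → p ≤ q)
    (hpn : ∀ H : Subgroup A, H ≠ ⊤ → Group.IsNilpotent H)
    (hA : ¬ Group.IsNilpotent A)
    (P : Sylow p A) (hnorm : (P : Subgroup A).Normal)
    (hexp : Monoid.exponent (P : Subgroup A) = p)
    (hcyc : ¬ IsCyclic (P : Subgroup A)) :
    ∃ x : A, x ∈ P ∧ orderOf x = p ∧ ¬ IsSPermutable (Subgroup.zpowers x) := by
  haveI : Fact p.Prime := ⟨hp⟩
  by_contra hcon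
  push_neg at hcon
  apply hA
  -- every nontrivial element of P has order p
  have horder : ∀ g : A, g ∈ P → g ≠ 1 → orderOf g = p := by
    intro g hg hg1
    have h1 : orderOf (⟨g, hg⟩ : (P : Subgroup A)) ∣ p :=
      (Monoid.order_dvd_exponent _).trans (dvd_of_eq hexp)
    have h2 : orderOf g = orderOf (⟨g, hg⟩ : (P : Subgroup A)) := by
      simpa using (orderOf_injective (P : Subgroup A).subtype Subtype.coe_injective ⟨g, hg⟩).symm
    rcases (Nat.dvd_prime hp).mp (h2 ▸ h1) with h | h
    · exact absurd (orderOf_eq_one_iff.mp h) hg1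
    · exact h
  have hpow : ∀ g : A, g ∈ P → g ^ p = 1 := by
    intro g hg
    rcases eq_or_ne g 1 with rfl | h
    · simp
    · rw [← horder g hg h]; exact pow_orderOf_eq_one g
  -- Step 1: elements of Sylow r-subgroups (r ≠ p) commute with all elements of P
  have hcomm : ∀ (r : ℕ), r.Prime → r ≠ p → ∀ Q : Sylow r A, ∀ y ∈ Q, ∀ g ∈ P,
      Commute g y := by
    intro r hr hrp Q y hy g hg
    rcases eq_or_ne g 1 with rfl | hg1
    · exact Commute.one_left y
    have hog : orderOf g = p := horder g hg hg1
    have hsperm := hcon g hg hog r hr Q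
    have hsup := coe_sup_of_mul_comm' (H := Subgroup.zpowers g) (K := (Q : Subgroup A)) hsperm
    have hHne : Subgroup.zpowers g ⊔ (Q : Subgroup A) ≠ ⊤ := by
      intro htop
      apply hcyc
      have hPle : ∀ a : A, a ∈ P → a ∈ Subgroup.zpowers g := by
        intro a ha
        have hmem : a ∈ ((Subgroup.zpowers g ⊔ (Q : Subgroup A) : Subgroup A) : Set A) := by
          rw [htop]; trivial
        rw [hsup] at hmem
        obtain ⟨u, hu, v, hv, huv0⟩ := hmem
        have huv : u * v = a := huv0
        have huP : u ∈ (P : Subgroup A) := (Subgroup.zpowers_le.mpr hg) hu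
        have hvP : v ∈ (P : Subgroup A) := by
          have hv' : v = u⁻¹ * a := by rw [← huv]; group
          rw [hv']; exact mul_mem (inv_mem huP) ha
        obtain ⟨k, hk⟩ := Q.2 ⟨v, hv⟩
        have hvr : v ^ r ^ k = 1 := by simpa using congrArg Subtype.val hk
        have hv1 : v = 1 := by
          have hd1 : orderOf v ∣ p := orderOf_dvd_of_pow_eq_one (hpow v hvP)
          have hd2 : orderOf v ∣ r ^ k := orderOf_dvd_of_pow_eq_one hvr
          have hcop : Nat.Coprime p (r ^ k) :=
            ((Nat.coprime_primes hp hr).mpr (Ne.symm hrp)).pow_right k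
          have hone : orderOf v ∣ 1 := hcop ▸ Nat.dvd_gcd hd1 hd2
          exact orderOf_eq_one_iff.mp (Nat.dvd_one.mp hone)
        rw [hv1, mul_one] at huv
        exact huv ▸ hu
      refine ⟨⟨⟨g, hg⟩, fun b => ?_⟩⟩
      obtain ⟨k, hk⟩ := Subgroup.mem_zpowers_iff.mp (hPle (b : A) b.2)
      exact Subgroup.mem_zpowers_iff.mpr ⟨k, Subtype.ext (by push_cast; exact hk)⟩
    have hHnil := hpn _ hHne
    have hgH : g ∈ Subgroup.zpowers g ⊔ (Q : Subgroup A) :=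
      Subgroup.mem_sup_left (Subgroup.mem_zpowers g)
    have hyH : y ∈ Subgroup.zpowers g ⊔ (Q : Subgroup A) := Subgroup.mem_sup_right hy
    obtain ⟨k, hk⟩ := Q.2 ⟨y, hy⟩
    have hyr : y ^ r ^ k = 1 := by simpa using congrArg Subtype.val hk
    have hcxy : Commute (⟨g, hgH⟩ : (Subgroup.zpowers g ⊔ (Q : Subgroup A) : Subgroup A))
        ⟨y, hyH⟩ := by
      apply commute_of_nilpotent_coprime' hHnil hp hr (Ne.symm hrp)
      · exact ⟨1, Subtype.ext (by push_cast; rw [pow_one]; exact hpow g hg)⟩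
      · exact ⟨k, Subtype.ext (by push_cast; exact hyr)⟩
    have hfin : g * y = y * g := by simpa using congrArg Subtype.val hcxy
    exact hfin
  -- Step 3: a proper normal subgroup containing all Sylow r-subgroups, r ≠ p
  obtain ⟨N, hNtop, hNnorm, hNle⟩ :
      ∃ N : Subgroup A, N ≠ ⊤ ∧ N.Normal ∧
        ∀ (r : ℕ), r.Prime → r ≠ p → ∀ Q : Sylow r A, (Q : Subgroup A) ≤ N := by
    by_cases hC : Subgroup.centralizer ((P : Subgroup A) : Set A) = ⊤
    · -- P is central: Burnside's normal p-complement theorem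
      have hP : Subgroup.normalizer ((P : Subgroup A) : Set A) ≤ Subgroup.centralizer ((P : Subgroup A) : Set A) := by
        rw [hC]; exact le_top
      refine ⟨(MonoidHom.transferSylow P hP).ker, ?_, MonoidHom.normal_ker _, ?_⟩
      · -- the kernel is proper
        have hcompl := MonoidHom.ker_transferSylow_isComplement' P hP
        obtain ⟨g, hg⟩ := exists_prime_orderOf_dvd_card' p hdvd
        have hgpg : IsPGroup p (Subgroup.zpowers g) :=
          IsPGroup.of_card (by rw [Nat.card_zpowers, hg, pow_one])
        obtain ⟨Q', hQ'⟩ := hgpg.exists_le_sylow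
        haveI := Sylow.unique_of_normal P hnorm
        have hQP : Q' = P := Subsingleton.elim _ _
        have hgP : g ∈ P := by rw [← hQP]; exact hQ' (Subgroup.mem_zpowers g)
        intro htop
        have hg1 : g = 1 :=
          Subgroup.disjoint_def.mp hcompl.disjoint (htop ▸ Subgroup.mem_top g) hgP
        rw [hg1, orderOf_one] at hg
        exact hp.one_lt.ne' hg.symm
      · intro r hr hrp Q y hy
        have hcompl := MonoidHom.ker_transferSylow_isComplement' P hP
        obtain ⟨k, hk⟩ := Q.2 ⟨y, hy⟩
        have hyr : y ^ r ^ k = 1 := by simpa using congrArg Subtype.val hk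
        obtain ⟨n, hPcard⟩ := P.2.exists_card_eq
        set K := (MonoidHom.transferSylow P hP).ker with hKdef
        have hidx : K.index = p ^ n := by rw [hcompl.symm.index_eq_card, hPcard]
        let φ := QuotientGroup.mk' K
        have h1 : φ y ^ r ^ k = 1 := by rw [← map_pow, hyr, map_one]
        have hd2 : orderOf (φ y) ∣ r ^ k := orderOf_dvd_of_pow_eq_one h1
        have hd1 : orderOf (φ y) ∣ p ^ n := by
          rw [← hidx, Subgroup.index_eq_card]
          exact orderOf_dvd_natCard _
        have hcop : Nat.Coprime (p ^ n) (r ^ k) :=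
          (((Nat.coprime_primes hp hr).mpr (Ne.symm hrp)).pow_right k).pow_left n
        have hone : orderOf (φ y) ∣ 1 := hcop ▸ Nat.dvd_gcd hd1 hd2
        have : φ y = 1 := orderOf_eq_one_iff.mp (Nat.dvd_one.mp hone)
        exact (QuotientGroup.eq_one_iff y).mp this
    · -- the centralizer of P is a proper normal subgroup
      refine ⟨Subgroup.centralizer ((P : Subgroup A) : Set A), hC, ?_, ?_⟩
      · constructor
        intro n hn g
        rw [Subgroup.mem_centralizer_iff] at hn ⊢
        intro h hh
        have hh' : g⁻¹ * h * g ∈ ((P : Subgroup A) : Set A) := by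
          have := hnorm.conj_mem h hh g⁻¹
          rw [inv_inv] at this; exact this
        have key := hn _ hh'
        calc h * (g * n * g⁻¹) = g * ((g⁻¹ * h * g) * n) * g⁻¹ := by group
          _ = g * (n * (g⁻¹ * h * g)) * g⁻¹ := by rw [key]
          _ = (g * n * g⁻¹) * h := by group
      · intro r hr hrp Q y hy
        exact Subgroup.mem_centralizer_iff.mpr fun h hh => hcomm r hr hrp Q y hy h hh
  -- Step 4: every Sylow subgroup of A is normal, hence A is nilpotent
  refine ((isNilpotent_of_finite_tfae (G := A)).out 0 3).mpr ?_
  intro r hr R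
  by_cases hrp : r = p
  · subst hrp
    haveI := Sylow.unique_of_normal P hnorm
    have : R = P := Subsingleton.elim _ _
    rw [this]; exact hnorm
  · have hle : (R : Subgroup A) ≤ N := hNle r hr.out hrp R
    haveI := hNnorm
    have hnilN := hpn N hNtop
    have htfN := (isNilpotent_of_finite_tfae (G := N)).out 0 3
    have hRN := htfN.mp hnilN r hr (R.subtype hle)
    rw [Sylow.coe_subtype] at hRN
    have hNnle : N ≤ Subgroup.normalizer ((R : Subgroup A) : Set A) := by
      intro n hn
      rw [Subgroup.mem_normalizer_iff]
      intro y
      constructor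
      · intro hy
        have := hRN.conj_mem ⟨y, hle hy⟩ (by rwa [Subgroup.mem_subgroupOf]) ⟨n, hn⟩
        rwa [Subgroup.mem_subgroupOf] at this
      · intro hy
        have hyN : n * y * n⁻¹ ∈ N := hle hy
        have := hRN.conj_mem ⟨n * y * n⁻¹, hyN⟩ (by rwa [Subgroup.mem_subgroupOf]) ⟨n, hn⟩⁻¹
        rw [Subgroup.mem_subgroupOf] at this
        have hcoe : ((⟨n, hn⟩⁻¹ * ⟨n * y * n⁻¹, hyN⟩ * (⟨n, hn⟩⁻¹)⁻¹ : N) : A) = y := by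
          push_cast
          group
        rwa [hcoe] at this
    have hntop : Subgroup.normalizer ((R : Subgroup A) : Set A) = ⊤ := by
      have hfr : Subgroup.normalizer ((R : Subgroup A) : Set A) ⊔ N = ⊤ := Sylow.normalizer_sup_eq_top' (p := r) (N := N) R hle
      rwa [sup_eq_left.mpr hNnle] at hfr
    exact Subgroup.normalizer_eq_top_iff.mp hntop
end

section
/- Let G be a finite group, P a normal Sylow p-subgroup of G with Q a Sylow q-subgroup (q ≠ p) such that G = PQ, P/Φ(P) a chief factor of G, and x ∈ P an element of order 4 (p = 2). If ⟨x⟩ is weakly SΦ-supplemented in G and ⟨x⟩ is not S-permutable in G, then P = ⟨x⟩, i.e., P is cyclic of order 4. -/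
open scoped Pointwise

open scoped commutatorElement

section Aux

open Subgroup

lemma aux_not_mem_zpowers_sq {G : Type*} [Group G] {x : G} (ho : orderOf x = 4) :
    x ∉ Subgroup.zpowers (x ^ 2) := by
  rintro ⟨k, hk⟩
  simp only at hk
  have hk' : x ^ ((2 : ℤ) * k) = x := by
    rw [zpow_mul, zpow_ofNat]; exact hk
  have h1 : x ^ (2 * k - 1) = 1 := by
    rw [zpow_sub, hk', zpow_one, mul_inv_cancel]
  have h2 : ((orderOf x : ℤ)) ∣ (2 * k - 1) := orderOf_dvd_iff_zpow_eq_one.mpr h1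
  rw [ho] at h2
  obtain ⟨c, hc⟩ := h2
  omega

lemma aux_le_zpowers_sq {G : Type*} [Group G] {x : G} (ho : orderOf x = 4)
    {B : Subgroup G} (hB : B ≤ Subgroup.zpowers x) (hxB : x ∉ B) :
    B ≤ Subgroup.zpowers (x ^ 2) := by
  intro b hb
  obtain ⟨n, rfl⟩ := hB hb
  rcases Int.even_or_odd n with ⟨m, hm⟩ | ⟨m, hm⟩
  · refine ⟨m, ?_⟩
    simp only
    have h2m : (2 : ℤ) * m = n := by omega
    calc (x ^ 2) ^ m = (x ^ (2 : ℤ)) ^ m := by rw [zpow_ofNat]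
    _ = x ^ ((2 : ℤ) * m) := by rw [← zpow_mul]
    _ = x ^ n := by rw [h2m]
  · exfalso
    apply hxB
    have h4 : x ^ (4 : ℤ) = 1 := by
      rw [zpow_ofNat, ← ho, pow_orderOf_eq_one]
    have key : (x ^ n) ^ n = x := by
      rw [← zpow_mul, show n * n = 4 * (m * m + m) + 1 by rw [hm]; ring,
        zpow_add, zpow_mul, h4, one_zpow, one_mul, zpow_one]
    exact key ▸ B.zpow_mem hb n

lemma aux_commutator_mem_frattini {H : Type*} [Group H] [Finite H]
    (hn : Group.IsNilpotent H) (a b : H) : ⁅a, b⁆ ∈ frattini H := by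
  have hfr : frattini H = ⨅ M ∈ {M : Subgroup H | IsCoatom M}, M := rfl
  rw [hfr]
  simp only [Subgroup.mem_iInf]
  intro M hM
  haveI hMn : M.Normal :=
    Subgroup.NormalizerCondition.normal_of_coatom M normalizerCondition_of_isNilpotent hM
  -- the quotient H ⧸ M is commutative since every subgroup of it is ⊥ or ⊤
  have hcomm : ∀ u v : H ⧸ M, u * v = v * u := by
    intro u v
    by_cases hu : u = 1
    · simp [hu]
    · -- the preimage of zpowers u strictly contains M, hence is ⊤
      obtain ⟨w, rfl⟩ := QuotientGroup.mk'_surjective M u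
      have hMle : M ≤ (Subgroup.zpowers ((QuotientGroup.mk' M) w)).comap
          (QuotientGroup.mk' M) := by
        intro m hm
        have : (QuotientGroup.mk' M) m = 1 := by
          simpa [QuotientGroup.eq_one_iff] using hm
        simp only [Subgroup.mem_comap, this]
        exact Subgroup.one_mem _
      have hne : M ≠ (Subgroup.zpowers ((QuotientGroup.mk' M) w)).comap
          (QuotientGroup.mk' M) := by
        intro hEq
        apply hu
        have hwmem : w ∈ (Subgroup.zpowers ((QuotientGroup.mk' M) w)).comap
            (QuotientGroup.mk' M) := by
          simp [Subgroup.mem_comap, Subgroup.mem_zpowers]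
        rw [← hEq] at hwmem
        simpa [QuotientGroup.eq_one_iff] using hwmem
      have htop : (Subgroup.zpowers ((QuotientGroup.mk' M) w)).comap
          (QuotientGroup.mk' M) = ⊤ := hM.2 _ (lt_of_le_of_ne hMle hne)
      obtain ⟨w', rfl⟩ := QuotientGroup.mk'_surjective M v
      have hw' : w' ∈ (Subgroup.zpowers ((QuotientGroup.mk' M) w)).comap
          (QuotientGroup.mk' M) := htop ▸ Subgroup.mem_top w'
      obtain ⟨k, hk⟩ := Subgroup.mem_comap.mp hw'
      rw [← hk]
      exact (Commute.refl _).zpow_right k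
  have : (QuotientGroup.mk' M) ⁅a, b⁆ = 1 := by
    rw [commutatorElement_def]
    simp only [map_mul, map_inv]
    rw [hcomm ((QuotientGroup.mk' M) a) ((QuotientGroup.mk' M) b)]
    group
  exact (QuotientGroup.eq_one_iff _).mp this

end Aux

theorem stmt19 {G : Type*} [Group G] [Finite G] (q : ℕ) (hq : q.Prime) (hq2 : q ≠ 2)
    (P : Sylow 2 G) (hnorm : (P : Subgroup G).Normal) (Q : Sylow q G)
    (hPQ : ((P : Subgroup G) : Set G) * ((Q : Subgroup G) : Set G) = Set.univ)
    (hchief : IsChiefFactor ((frattini (P : Subgroup G)).map (P : Subgroup G).subtype)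
      (P : Subgroup G))
    (x : G) (hx : x ∈ P) (ho : orderOf x = 4)
    (hw : WeaklySPhiSupplemented (Subgroup.zpowers x))
    (hns : ¬ IsSPermutable (Subgroup.zpowers x)) :
    (P : Subgroup G) = Subgroup.zpowers x := by
  classical
  obtain ⟨hΦn, hPn2, hltΦ, hmin⟩ := hchief
  set A : Subgroup G := Subgroup.zpowers x with hA
  set Pg : Subgroup G := (P : Subgroup G) with hPg
  set Φ : Subgroup G := (frattini Pg).map Pg.subtype with hΦ
  have hxne : x ≠ 1 := by
    intro h; rw [h, orderOf_one] at ho; norm_num at ho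
  have hxP : A ≤ Pg := Subgroup.zpowers_le.mpr hx
  have hxsq : x ∉ Subgroup.zpowers (x ^ 2) := aux_not_mem_zpowers_sq ho
  obtain ⟨T, hT1, hT2⟩ := hw
  -- instances
  haveI : Fact (Nat.Prime 2) := ⟨Nat.prime_two⟩
  haveI hfinSubP : Finite (Subgroup Pg) :=
    Finite.of_injective (fun (S : Subgroup Pg) => (S : Set Pg)) SetLike.coe_injective
  haveI hfinSubA : Finite (Subgroup A) :=
    Finite.of_injective (fun (S : Subgroup A) => (S : Set A)) SetLike.coe_injective
  have hnilp : Group.IsNilpotent Pg := P.isPGroup'.isNilpotent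
  -- sCore A ≤ ⟨x²⟩
  have hscore : sCore A ≤ Subgroup.zpowers (x ^ 2) := by
    refine iSup₂_le ?_
    rintro B ⟨hBA, hBs⟩
    refine aux_le_zpowers_sq ho hBA ?_
    intro hxB
    exact hns (by
      have hBAeq : B = A := le_antisymm hBA (Subgroup.zpowers_le.mpr hxB)
      rwa [hBAeq] at hBs)
  -- Φ(A) ≤ ⟨x²⟩
  have hfrA : (frattini A).map A.subtype ≤ Subgroup.zpowers (x ^ 2) := by
    refine aux_le_zpowers_sq ho (Subgroup.map_subtype_le _) ?_
    intro hxF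
    obtain ⟨y, hyF, hyx⟩ := hxF
    haveI : Nontrivial A :=
      ⟨⟨⟨x, Subgroup.mem_zpowers x⟩, 1, by
        intro h
        exact hxne (by simpa using congrArg Subtype.val h)⟩⟩
    have hzy : Subgroup.zpowers y = (⊤ : Subgroup A) := by
      rw [eq_top_iff]
      rintro ⟨g, hg⟩ _
      obtain ⟨n, hn⟩ := hg
      refine ⟨n, ?_⟩
      apply Subtype.ext
      have hyx' : (y : G) = x := hyx
      simp only [SubgroupClass.coe_zpow, Subgroup.coe_zpow, hyx']
      exact hn
    have hfrtop : frattini A = ⊤ := by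
      rw [eq_top_iff, ← hzy]
      exact Subgroup.zpowers_le.mpr hyF
    have : (⊥ : Subgroup A) = ⊤ :=
      frattini_nongenerating (by rw [hfrtop, sup_top_eq])
    exact absurd this bot_ne_top
  -- hence A ⊓ T ≤ ⟨x²⟩, and x ∉ T
  have hAT : A ⊓ T ≤ Subgroup.zpowers (x ^ 2) := hT2.trans (sup_le hfrA hscore)
  have hxT : x ∉ T := fun h => hxsq (hAT ⟨Subgroup.mem_zpowers x, h⟩)
  -- Dedekind: Pg ≤ A ⊔ (Pg ⊓ T)
  have hded : Pg ≤ A ⊔ (Pg ⊓ T) := by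
    intro p hp
    have hpu : p ∈ (Set.univ : Set G) := trivial
    rw [← hT1] at hpu
    obtain ⟨a, ha, t, ht, rfl⟩ := hpu
    have htP : t ∈ Pg := by
      have : a⁻¹ * (a * t) ∈ Pg := mul_mem (inv_mem (hxP ha)) hp
      simpa [mul_assoc] using this
    exact mul_mem ((le_sup_left : A ≤ A ⊔ (Pg ⊓ T)) ha)
      ((le_sup_right : Pg ⊓ T ≤ A ⊔ (Pg ⊓ T)) ⟨htP, ht⟩)
  -- commutators of Pg lie in Φ
  have hcomm : ∀ a b : G, a ∈ Pg → b ∈ Pg → ⁅a, b⁆ ∈ Φ := by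
    intro a b ha hb
    refine ⟨⁅(⟨a, ha⟩ : Pg), (⟨b, hb⟩ : Pg)⁆,
      aux_commutator_mem_frattini hnilp _ _, ?_⟩
    simp [commutatorElement_def]
  -- L := Φ ⊔ (Pg ⊓ T) is normal in G
  set L : Subgroup G := Φ ⊔ (Pg ⊓ T) with hL
  haveI : Φ.Normal := hΦn
  have hmemL : ∀ m, m ∈ L → ∃ f ∈ Φ, ∃ k ∈ Pg ⊓ T, f * k = m := by
    intro m hm
    have : m ∈ (Φ : Set G) * ((Pg ⊓ T : Subgroup G) : Set G) := by
      rw [← Subgroup.normal_mul]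
      exact hm
    simpa [Set.mem_mul] using this
  have hΦL : Φ ≤ L := le_sup_left
  have hPTL : Pg ⊓ T ≤ L := le_sup_right
  have claimT : ∀ t ∈ T, ∀ m ∈ L, t * m * t⁻¹ ∈ L := by
    intro t ht m hm
    obtain ⟨f, hf, k, hk, rfl⟩ := hmemL m hm
    have heq : t * (f * k) * t⁻¹ = (t * f * t⁻¹) * (t * k * t⁻¹) := by group
    rw [heq]
    refine mul_mem (hΦL (hΦn.conj_mem f hf t)) (hPTL ⟨?_, ?_⟩)
    · exact hnorm.conj_mem k hk.1 t
    · exact T.mul_mem (T.mul_mem ht hk.2) (T.inv_mem ht)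
  have claimP : ∀ a ∈ Pg, ∀ m ∈ L, a * m * a⁻¹ ∈ L := by
    intro a ha m hm
    obtain ⟨f, hf, k, hk, rfl⟩ := hmemL m hm
    have heq : a * (f * k) * a⁻¹ = (a * f * a⁻¹) * (a * k * a⁻¹) := by group
    rw [heq]
    refine mul_mem (hΦL (hΦn.conj_mem f hf a)) ?_
    have heq2 : a * k * a⁻¹ = ⁅a, k⁆ * k := by
      rw [commutatorElement_def]; group
    rw [heq2]
    exact mul_mem (hΦL (hcomm a k ha hk.1)) (hPTL hk)
  have hLnorm : L.Normal := by
    constructor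
    intro n hn g
    have hgu : g ∈ (Set.univ : Set G) := trivial
    rw [← hT1] at hgu
    obtain ⟨a, ha, t, ht, rfl⟩ := hgu
    have heq : (a * t) * n * (a * t)⁻¹ = a * (t * n * t⁻¹) * a⁻¹ := by group
    rw [heq]
    exact claimP a (hxP ha) _ (claimT t ht n hn)
  -- apply the chief factor hypothesis
  have hLle : L ≤ Pg := sup_le (Subgroup.map_subtype_le _) inf_le_left
  rcases hmin L hLnorm le_sup_left hLle with hcase | hcase
  · -- L = Φ : then Pg ⊓ T ≤ Φ, so Pg ≤ A ⊔ Φ, and by nongeneration Pg ≤ A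
    have hPTΦ : Pg ⊓ T ≤ Φ := le_sup_right.trans hcase.le
    have hPAΦ : Pg ≤ A ⊔ Φ := hded.trans (sup_le le_sup_left (hPTΦ.trans le_sup_right))
    have hAΦP : A ⊔ Φ = Pg :=
      le_antisymm (sup_le hxP (Subgroup.map_subtype_le _)) hPAΦ
    -- move to subgroups of Pg
    have hsup : A.subgroupOf Pg ⊔ frattini Pg = ⊤ := by
      apply Subgroup.map_injective Pg.subtype_injective
      rw [Subgroup.map_sup, Subgroup.subgroupOf_map_subtype, ← hΦ,
        inf_eq_left.mpr hxP]
      rw [← MonoidHom.range_eq_map, Subgroup.range_subtype]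
      exact hAΦP
    have hKtop : A.subgroupOf Pg = ⊤ := frattini_nongenerating hsup
    have hPA : Pg ≤ A := by
      intro p hp
      have : (⟨p, hp⟩ : Pg) ∈ A.subgroupOf Pg := hKtop ▸ Subgroup.mem_top _
      exact this
    exact le_antisymm hPA hxP
  · -- L = Pg : then Pg ≤ T by nongeneration, so x ∈ T, contradiction
    exfalso
    have hsup : (Pg ⊓ T).subgroupOf Pg ⊔ frattini Pg = ⊤ := by
      apply Subgroup.map_injective Pg.subtype_injective
      rw [Subgroup.map_sup, Subgroup.subgroupOf_map_subtype, ← hΦ,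
        inf_eq_left.mpr (inf_le_left : Pg ⊓ T ≤ Pg)]
      rw [← MonoidHom.range_eq_map, Subgroup.range_subtype]
      rw [sup_comm]
      exact hcase
    have hKtop : (Pg ⊓ T).subgroupOf Pg = ⊤ := frattini_nongenerating hsup
    have hPT : Pg ≤ T := by
      intro p hp
      have : (⟨p, hp⟩ : Pg) ∈ (Pg ⊓ T).subgroupOf Pg := hKtop ▸ Subgroup.mem_top _
      exact this.2
    exact hxT (hPT hx)
end
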